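/- arXiv:1001.1396 — 3 statements merged into one kernel-verified Lean document; each statement's English description precedes it below -/
import Mathlib

section
/- Suppose (W, W') ∈ ℝ^k × ℝ^k is an exchangeable pair satisfying E(W'|W) = (I_k − Λ)W for an invertible matrix Λ, ‖W − W'‖₂ ≤ K almost surely, and m(θ) = E(e^{θᵗW}) < ∞ for all θ ∈ ℝ^k. Then ‖∇m(θ)‖₂ ≤ (K² ‖θ‖₂ ν₁ / 2) m(θ), where ν₁ = 1/σ₁(Λ) and σ₁(Λ) is the smallest singular value of Λ. -/
open MeasureTheory ProbabilityTheory Real Matrix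

/-- The Euclidean (ℓ²) norm on `Fin k → ℝ`. -/
noncomputable def norm2 {k : ℕ} (x : Fin k → ℝ) : ℝ := Real.sqrt (∑ i, x i ^ 2)

/-- The smallest singular value of a square real matrix: the infimum of `‖Λx‖₂`
over unit vectors `x`. -/
noncomputable def smallestSingularValue {k : ℕ} (Λ : Matrix (Fin k) (Fin k) ℝ) : ℝ :=
  sInf {r | ∃ x : Fin k → ℝ, norm2 x = 1 ∧ r = norm2 (Λ.mulVec x)}


lemma sinh_le_mul_cosh {t : ℝ} (ht : 0 ≤ t) : Real.sinh t ≤ t * Real.cosh t := by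
  have h : MonotoneOn (fun t : ℝ => t * Real.cosh t - Real.sinh t) (Set.Ici 0) := by
    apply monotoneOn_of_deriv_nonneg (convex_Ici 0)
    · exact (continuous_id.mul Real.continuous_cosh).sub Real.continuous_sinh |>.continuousOn
    · intro x hx
      exact ((differentiable_id.mul Real.differentiable_cosh).sub
        Real.differentiable_sinh).differentiableAt.differentiableWithinAt
    · intro x hx
      have hd : HasDerivAt (fun t : ℝ => t * Real.cosh t - Real.sinh t)
          (1 * Real.cosh x + x * Real.sinh x - Real.cosh x) x :=
        ((hasDerivAt_id x).mul (Real.hasDerivAt_cosh x)).sub (Real.hasDerivAt_sinh x)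
      rw [hd.deriv]
      rw [interior_Ici, Set.mem_Ioi] at hx
      have : 0 ≤ x * Real.sinh x := mul_nonneg hx.le (Real.sinh_nonneg_iff.2 hx.le)
      linarith
  have := h (Set.self_mem_Ici) ht ht
  simpa using this

lemma exp_sub_le (a b : ℝ) : |Real.exp a - Real.exp b| ≤ |a - b| * (Real.exp a + Real.exp b) / 2 := by
  wlog hab : b ≤ a with H
  · have := H b a (le_of_not_ge hab)
    rw [abs_sub_comm, abs_sub_comm b a] at this
    linarith [this]
  set m := (a + b) / 2 with hm
  set d := (a - b) / 2 with hdd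
  have hd : 0 ≤ d := by rw [hdd]; linarith
  have ea : Real.exp a = Real.exp m * Real.exp d := by
    rw [← Real.exp_add]; congr 1; rw [hm, hdd]; ring
  have eb : Real.exp b = Real.exp m * Real.exp (-d) := by
    rw [← Real.exp_add]; congr 1; rw [hm, hdd]; ring
  have h1 : Real.exp a - Real.exp b = 2 * Real.exp m * Real.sinh d := by
    rw [Real.sinh_eq, ea, eb]; ring
  have h2 : (a - b) * (Real.exp a + Real.exp b) / 2 = 2 * d * (Real.exp m * Real.cosh d) := by
    rw [Real.cosh_eq, ea, eb, hdd]; ring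
  have hs := sinh_le_mul_cosh hd
  have hm' : 0 < Real.exp m := Real.exp_pos m
  rw [abs_of_nonneg (sub_nonneg.2 hab), abs_of_nonneg
    (sub_nonneg.2 (Real.exp_le_exp.2 hab)), h1, h2]
  nlinarith [Real.sinh_nonneg_iff.2 hd, Real.cosh_pos d]



lemma norm2_nonneg {k : ℕ} (x : Fin k → ℝ) : 0 ≤ norm2 x := Real.sqrt_nonneg _

lemma norm2_eq_norm {k : ℕ} (x : Fin k → ℝ) :
    norm2 x = ‖(WithLp.equiv 2 (Fin k → ℝ)).symm x‖ := by
  rw [EuclideanSpace.norm_eq, norm2]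
  congr 1
  apply Finset.sum_congr rfl
  intro i _
  rw [Real.norm_eq_abs, sq_abs]
  rfl

lemma abs_le_norm2 {k : ℕ} (x : Fin k → ℝ) (i : Fin k) : |x i| ≤ norm2 x := by
  rw [norm2, ← Real.sqrt_sq_eq_abs]
  apply Real.sqrt_le_sqrt
  exact Finset.single_le_sum (f := fun j => x j ^ 2) (fun j _ => sq_nonneg _) (Finset.mem_univ i)

lemma norm2_smul {k : ℕ} (c : ℝ) (x : Fin k → ℝ) : norm2 (c • x) = |c| * norm2 x := by
  rw [norm2, norm2]
  have : ∑ i, (c • x) i ^ 2 = c ^ 2 * ∑ i, x i ^ 2 := by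
    rw [Finset.mul_sum]; apply Finset.sum_congr rfl; intro i _; simp [mul_pow]
  rw [this, Real.sqrt_mul (sq_nonneg c), Real.sqrt_sq_eq_abs]

lemma norm2_smul_fun {k : ℕ} (c : ℝ) (x : Fin k → ℝ) :
    norm2 (fun i => c * x i) = |c| * norm2 x := norm2_smul c x

lemma dotProduct_le_norm2 {k : ℕ} (x y : Fin k → ℝ) : |x ⬝ᵥ y| ≤ norm2 x * norm2 y := by
  rw [← Real.sqrt_sq_eq_abs, norm2, norm2, ← Real.sqrt_mul (by positivity)]
  apply Real.sqrt_le_sqrt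
  exact Finset.sum_mul_sq_le_sq_mul_sq _ _ _

lemma norm2_mulVec_le {k : ℕ} (M : Matrix (Fin k) (Fin k) ℝ) (x : Fin k → ℝ) :
    norm2 (M.mulVec x) ≤ Real.sqrt (∑ i, ∑ j, M i j ^ 2) * norm2 x := by
  rw [norm2, norm2, ← Real.sqrt_mul (by positivity)]
  apply Real.sqrt_le_sqrt
  rw [Finset.sum_mul]
  apply Finset.sum_le_sum
  intro i _
  simp only [Matrix.mulVec, dotProduct]
  exact Finset.sum_mul_sq_le_sq_mul_sq Finset.univ (fun j => M i j) x

lemma ssv_bddBelow {k : ℕ} (Λ : Matrix (Fin k) (Fin k) ℝ) :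
    BddBelow {r | ∃ x : Fin k → ℝ, norm2 x = 1 ∧ r = norm2 (Λ.mulVec x)} := by
  refine ⟨0, fun r hr => ?_⟩
  obtain ⟨x, _, rfl⟩ := hr
  exact norm2_nonneg _

lemma ssv_le {k : ℕ} (Λ : Matrix (Fin k) (Fin k) ℝ) {x : Fin k → ℝ} (hx : norm2 x = 1) :
    smallestSingularValue Λ ≤ norm2 (Λ.mulVec x) :=
  csInf_le (ssv_bddBelow Λ) ⟨x, hx, rfl⟩

lemma ssv_mul_le {k : ℕ} (Λ : Matrix (Fin k) (Fin k) ℝ) (u : Fin k → ℝ) :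
    smallestSingularValue Λ * norm2 u ≤ norm2 (Λ.mulVec u) := by
  by_cases hu : norm2 u = 0
  · rw [hu, mul_zero]; exact norm2_nonneg _
  · have hu' : 0 < norm2 u := lt_of_le_of_ne (norm2_nonneg u) (Ne.symm hu)
    set c := (norm2 u)⁻¹ with hc
    have hc' : 0 < c := inv_pos.2 hu'
    have hx : norm2 (c • u) = 1 := by
      rw [norm2_smul, abs_of_pos hc', hc, inv_mul_cancel₀ hu]
    have h1 := ssv_le Λ hx
    rw [Matrix.mulVec_smul, norm2_smul, abs_of_pos hc'] at h1
    calc smallestSingularValue Λ * norm2 u ≤ c * norm2 (Λ.mulVec u) * norm2 u := by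
          exact mul_le_mul_of_nonneg_right h1 hu'.le
      _ = norm2 (Λ.mulVec u) := by
          rw [mul_assoc, mul_comm (norm2 (Λ.mulVec u)) (norm2 u), ← mul_assoc, hc, inv_mul_cancel₀ hu, one_mul]
    
lemma ssv_pos {k : ℕ} (hk : 0 < k) (Λ : Matrix (Fin k) (Fin k) ℝ) (hΛ : IsUnit Λ.det) :
    0 < smallestSingularValue Λ := by
  set C := Real.sqrt (∑ i, ∑ j, (Λ⁻¹) i j ^ 2) with hC
  have key : ∀ x : Fin k → ℝ, norm2 x = 1 → 1 ≤ C * norm2 (Λ.mulVec x) := by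
    intro x hx
    have : (Λ⁻¹).mulVec (Λ.mulVec x) = x := by
      rw [Matrix.mulVec_mulVec, Matrix.nonsing_inv_mul Λ hΛ, Matrix.one_mulVec]
    calc (1:ℝ) = norm2 x := hx.symm
      _ = norm2 ((Λ⁻¹).mulVec (Λ.mulVec x)) := by rw [this]
      _ ≤ C * norm2 (Λ.mulVec x) := norm2_mulVec_le _ _
  have i0 : Fin k := ⟨0, hk⟩
  set x₀ : Fin k → ℝ := fun j => if j = i0 then 1 else 0 with hx₀
  have hx₀n : norm2 x₀ = 1 := by
    rw [norm2, hx₀]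
    have : ∑ i, (if i = i0 then (1:ℝ) else 0) ^ 2 = 1 := by
      rw [Finset.sum_eq_single i0]
      · simp
      · intro b _ hb; simp [hb]
      · simp
    rw [this, Real.sqrt_one]
  have hCpos : 0 < C := by
    by_contra h
    push_neg at h
    have := key x₀ hx₀n
    nlinarith [norm2_nonneg (Λ.mulVec x₀)]
  have : ∀ r ∈ {r | ∃ x : Fin k → ℝ, norm2 x = 1 ∧ r = norm2 (Λ.mulVec x)}, 1 / C ≤ r := by
    rintro r ⟨x, hx, rfl⟩
    rw [div_le_iff₀ hCpos]
    linarith [key x hx]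
  have hne : {r | ∃ x : Fin k → ℝ, norm2 x = 1 ∧ r = norm2 (Λ.mulVec x)}.Nonempty :=
    ⟨_, x₀, hx₀n, rfl⟩
  calc (0:ℝ) < 1 / C := by positivity
    _ ≤ smallestSingularValue Λ := le_csInf hne this

lemma norm2_integral_le {k : ℕ} {Ω : Type*} [MeasurableSpace Ω] (μ : Measure Ω)
    (h : Fin k → Ω → ℝ) (hi : ∀ i, Integrable (h i) μ) :
    norm2 (fun i => ∫ ω, h i ω ∂μ) ≤ ∫ ω, norm2 (fun i => h i ω) ∂μ := by
  set H : Ω → EuclideanSpace ℝ (Fin k) :=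
    fun ω => (WithLp.equiv 2 (Fin k → ℝ)).symm (fun i => h i ω) with hHdef
  have hfun : ∀ ω, (fun i => h i ω) = ∑ i, h i ω • (Pi.single i 1 : Fin k → ℝ) := by
    intro ω; funext j
    rw [Finset.sum_apply]
    rw [Finset.sum_eq_single j]
    · simp
    · intro b _ hb; simp [Pi.single_apply, hb]
    · simp
  have hHsum : H = fun ω => ∑ i, h i ω •
      ((WithLp.linearEquiv 2 ℝ (Fin k → ℝ)).symm (Pi.single i 1)) := by
    funext ω
    show (WithLp.linearEquiv 2 ℝ (Fin k → ℝ)).symm (fun i => h i ω) = _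
    rw [hfun ω, map_sum]
    simp only [_root_.map_smul]
  have hH : Integrable H μ := by
    rw [hHsum]
    exact integrable_finset_sum _ (fun i _ => (hi i).smul_const _)
  have hcomp : ∀ j, (∫ ω, H ω ∂μ) j = ∫ ω, h j ω ∂μ := by
    intro j
    have := (EuclideanSpace.proj j : EuclideanSpace ℝ (Fin k) →L[ℝ] ℝ).integral_comp_comm hH
    have h2 : (EuclideanSpace.proj j : EuclideanSpace ℝ (Fin k) →L[ℝ] ℝ) (∫ ω, H ω ∂μ)
        = (∫ ω, H ω ∂μ) j := rfl
    rw [h2] at this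
    rw [← this]
    rfl
  have h1 : norm2 (fun i => ∫ ω, h i ω ∂μ) = ‖∫ ω, H ω ∂μ‖ := by
    rw [norm2_eq_norm]
    congr 1
    ext j
    exact (hcomp j).symm
  rw [h1]
  calc ‖∫ ω, H ω ∂μ‖ ≤ ∫ ω, ‖H ω‖ ∂μ := norm_integral_le_integral_norm _
    _ = ∫ ω, norm2 (fun i => h i ω) ∂μ := by
        apply integral_congr_ae
        filter_upwards with ω
        exact (norm2_eq_norm _).symm

/-- For an exchangeable pair `(W, W')` satisfying `E(W'|W) = (I - Λ)W` with `Λ` invertible,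
`‖W - W'‖₂ ≤ K` a.s. and finite mgf, the gradient `∇m(θ) = E(W e^{θᵗW})` of the mgf satisfies
`‖∇m(θ)‖₂ ≤ (K² ‖θ‖₂ ν₁ / 2) m(θ)` where `ν₁ = 1/σ₁(Λ)`. -/
theorem grad_mgf_bound
    {Ω : Type*} [MeasurableSpace Ω] (μ : Measure Ω) [IsProbabilityMeasure μ]
    {k : ℕ} (W W' : Ω → Fin k → ℝ)
    (hWmeas : Measurable W) (hW'meas : Measurable W')
    (hexch : IdentDistrib (fun ω => (W ω, W' ω)) (fun ω => (W' ω, W ω)) μ μ)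
    (Λ : Matrix (Fin k) (Fin k) ℝ) (hΛ : IsUnit Λ.det)
    (hcond : ∀ i, μ[fun ω => W' ω i | MeasurableSpace.comap W inferInstance]
      =ᵐ[μ] fun ω => ∑ j, (1 - Λ) i j * W ω j)
    (K : ℝ) (hK : ∀ᵐ ω ∂μ, norm2 (fun i => W ω i - W' ω i) ≤ K)
    (hmgf : ∀ θ : Fin k → ℝ, Integrable (fun ω => Real.exp (θ ⬝ᵥ W ω)) μ)
    (θ : Fin k → ℝ) :
    norm2 (fun i => ∫ ω, W ω i * Real.exp (θ ⬝ᵥ W ω) ∂μ)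
      ≤ (K ^ 2 * norm2 θ * (1 / smallestSingularValue Λ) / 2) *
          ∫ ω, Real.exp (θ ⬝ᵥ W ω) ∂μ := by
  rcases Nat.eq_zero_or_pos k with hk0 | hk
  · subst hk0
    simp [norm2]
  -- notation
  set f : Ω → ℝ := fun ω => Real.exp (θ ⬝ᵥ W ω) with hfdef
  set f' : Ω → ℝ := fun ω => Real.exp (θ ⬝ᵥ W' ω) with hf'def
  -- measurability basics
  have hWi : ∀ i, Measurable (fun ω => W ω i) := fun i => (measurable_pi_apply i).comp hWmeas
  have hW'i : ∀ i, Measurable (fun ω => W' ω i) := fun i => (measurable_pi_apply i).comp hW'meas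
  have hdotm : Measurable (fun x : Fin k → ℝ => θ ⬝ᵥ x) := by
    have : (fun x : Fin k → ℝ => θ ⬝ᵥ x) = fun x => ∑ i, θ i * x i := rfl
    rw [this]
    exact Finset.measurable_sum _ (fun i _ => measurable_const.mul (measurable_pi_apply i))
  have hgm : Measurable (fun x : Fin k → ℝ => Real.exp (θ ⬝ᵥ x)) :=
    Real.measurable_exp.comp hdotm
  have hfm : Measurable f := hgm.comp hWmeas
  have hf'm : Measurable f' := hgm.comp hW'meas
  have hfpos : ∀ ω, 0 < f ω := fun ω => Real.exp_pos _
  have hf'pos : ∀ ω, 0 < f' ω := fun ω => Real.exp_pos _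
  -- K nonneg
  have hK0 : 0 ≤ K := by
    obtain ⟨ω, hω⟩ := hK.exists
    exact (norm2_nonneg _).trans hω
  have hKi : ∀ i, ∀ᵐ ω ∂μ, |W ω i - W' ω i| ≤ K := by
    intro i
    filter_upwards [hK] with ω hω
    exact (abs_le_norm2 (fun j => W ω j - W' ω j) i).trans hω
  -- |x| ≤ e^x + e^{-x}
  have habs_exp : ∀ x : ℝ, |x| ≤ Real.exp x + Real.exp (-x) := by
    intro x
    rcases abs_cases x with ⟨h1, _⟩ | ⟨h1, _⟩ <;> rw [h1] <;>
      nlinarith [Real.add_one_le_exp x, Real.add_one_le_exp (-x), (Real.exp_pos x).le,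
        (Real.exp_pos (-x)).le]
  -- integrability of W i * e^{θ·W} for any shift really just θ
  have hWexp : ∀ i, Integrable (fun ω => W ω i * f ω) μ := by
    intro i
    refine Integrable.mono' ((hmgf (θ + Pi.single i 1)).add (hmgf (θ - Pi.single i 1)))
      ((hWi i).mul hfm).aestronglyMeasurable (ae_of_all _ fun ω => ?_)
    have h1 : (θ + Pi.single i 1) ⬝ᵥ W ω = θ ⬝ᵥ W ω + W ω i := by
      rw [add_dotProduct, single_dotProduct, one_mul]
    have h2 : (θ - Pi.single i 1) ⬝ᵥ W ω = θ ⬝ᵥ W ω - W ω i := by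
      rw [sub_dotProduct, single_dotProduct, one_mul]
    simp only [Pi.add_apply, Real.norm_eq_abs]
    rw [abs_mul, abs_of_pos (hfpos ω)]
    calc |W ω i| * f ω ≤ (Real.exp (W ω i) + Real.exp (-W ω i)) * f ω :=
          mul_le_mul_of_nonneg_right (habs_exp _) (hfpos ω).le
      _ = Real.exp ((θ + Pi.single i 1) ⬝ᵥ W ω) + Real.exp ((θ - Pi.single i 1) ⬝ᵥ W ω) := by
          rw [h1, h2, Real.exp_add, hfdef]
          rw [Real.exp_sub]
          have := Real.exp_pos (W ω i)
          have := Real.exp_neg (W ω i)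
          field_simp [Real.exp_neg]
          rw [mul_add, ← Real.exp_add (W ω i) (-W ω i), add_neg_cancel, Real.exp_zero]
          ring
  -- integrability of W i alone
  have hWint : ∀ i, Integrable (fun ω => W ω i) μ := by
    intro i
    refine Integrable.mono' ((hmgf (Pi.single i 1)).add (hmgf (-Pi.single i 1)))
      (hWi i).aestronglyMeasurable (ae_of_all _ fun ω => ?_)
    have h1 : (Pi.single i 1 : Fin k → ℝ) ⬝ᵥ W ω = W ω i := by
      rw [single_dotProduct, one_mul]
    have h2 : (-Pi.single i 1 : Fin k → ℝ) ⬝ᵥ W ω = -(W ω i) := by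
      rw [neg_dotProduct, single_dotProduct, one_mul]
    simp only [Pi.add_apply, Real.norm_eq_abs]
    rw [h1, h2]
    exact habs_exp _
  -- integrability of W' i alone
  have hW'int : ∀ i, Integrable (fun ω => W' ω i) μ := by
    intro i
    refine Integrable.mono' ((hWint i).abs.add (integrable_const K))
      (hW'i i).aestronglyMeasurable ?_
    filter_upwards [hKi i] with ω hω
    simp only [Pi.add_apply, Real.norm_eq_abs]
    have h1 : |W' ω i| ≤ |W ω i| + |W ω i - W' ω i| := by
      have := abs_sub_abs_le_abs_sub (W' ω i) (W ω i)
      rw [abs_sub_comm] at this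
      linarith [abs_nonneg (W ω i)]
    have h2 : |(fun ω => W ω i) ω| = |W ω i| := rfl
    rw [h2]
    linarith
  -- integrability of W' i * f
  have hW'exp : ∀ i, Integrable (fun ω => W' ω i * f ω) μ := by
    intro i
    refine Integrable.mono' ((hWexp i).abs.add (hmgf θ |>.const_mul K))
      ((hW'i i).mul hfm).aestronglyMeasurable ?_
    filter_upwards [hKi i] with ω hω
    have hb : |W' ω i| ≤ |W ω i| + K := by
      have := abs_sub_abs_le_abs_sub (W' ω i) (W ω i)
      rw [abs_sub_comm] at this
      linarith
    simp only [Pi.add_apply, Real.norm_eq_abs]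
    rw [abs_mul, abs_of_pos (hfpos ω)]
    calc |W' ω i| * f ω ≤ (|W ω i| + K) * f ω :=
          mul_le_mul_of_nonneg_right hb (hfpos ω).le
      _ = |W ω i| * f ω + K * f ω := by ring
      _ ≤ |W ω i * f ω| + K * f ω := by
          rw [abs_mul, abs_of_pos (hfpos ω)]
  -- f' integrable and ∫ f' = ∫ f
  have hidf : IdentDistrib f' f μ μ := by
    have h := hexch.symm.comp (u := fun p : (Fin k → ℝ) × (Fin k → ℝ) => Real.exp (θ ⬝ᵥ p.1))
      (hgm.comp measurable_fst)
    exact h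
  have hf'int : Integrable f' μ := hidf.integrable_iff.2 (hmgf θ)
  have hintf' : ∫ ω, f' ω ∂μ = ∫ ω, f ω ∂μ := hidf.integral_eq
  -- exchangeability swap
  have hswap : ∀ i, ∫ ω, f ω * (W ω i - W' ω i) ∂μ = ∫ ω, f' ω * (W' ω i - W ω i) ∂μ := by
    intro i
    have hg : Measurable (fun p : (Fin k → ℝ) × (Fin k → ℝ) =>
        Real.exp (θ ⬝ᵥ p.1) * (p.1 i - p.2 i)) :=
      (hgm.comp measurable_fst).mul
        (((measurable_pi_apply i).comp measurable_fst).sub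
          ((measurable_pi_apply i).comp measurable_snd))
    exact (hexch.comp hg).integral_eq
  -- integrability of products appearing
  have hfd_int : ∀ i, Integrable (fun ω => f ω * (W ω i - W' ω i)) μ := by
    intro i
    have h1 : Integrable (fun ω => W ω i * f ω - W' ω i * f ω) μ := (hWexp i).sub (hW'exp i)
    refine h1.congr ?_
    filter_upwards with ω
    ring
  have hf'd_int : ∀ i, Integrable (fun ω => f' ω * (W ω i - W' ω i)) μ := by
    intro i
    refine Integrable.mono' (hf'int.const_mul K)
      (hf'm.mul ((hWi i).sub (hW'i i))).aestronglyMeasurable ?_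
    filter_upwards [hKi i] with ω hω
    rw [Real.norm_eq_abs, abs_mul, abs_of_pos (hf'pos ω)]
    calc f' ω * |W ω i - W' ω i| ≤ f' ω * K :=
          mul_le_mul_of_nonneg_left hω (hf'pos ω).le
      _ = K * f' ω := by ring
  -- conditional expectation step
  have hcondint : ∀ i, ∫ ω, f ω * W' ω i ∂μ = ∫ ω, f ω * (∑ j, (1 - Λ) i j * W ω j) ∂μ := by
    intro i
    have hm : MeasurableSpace.comap W inferInstance ≤ (inferInstance : MeasurableSpace Ω) :=
      hWmeas.comap_le
    set m0 : MeasurableSpace Ω := MeasurableSpace.comap W inferInstance with hm0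
    have hfsm : StronglyMeasurable[m0] f := by
      have : Measurable[m0] f := fun s hs =>
        ⟨(fun x : Fin k → ℝ => Real.exp (θ ⬝ᵥ x)) ⁻¹' s, hgm hs, rfl⟩
      exact this.stronglyMeasurable
    have hprod : Integrable (f * fun ω => W' ω i) μ := by
      refine (hW'exp i).congr ?_
      filter_upwards with ω
      show W' ω i * f ω = (f * fun ω => W' ω i) ω
      simp [mul_comm]
    have hmul := condExp_mul_of_stronglyMeasurable_left hfsm hprod (hW'int i)
    have h1 : ∫ ω, f ω * W' ω i ∂μ = ∫ ω, (f * fun ω => W' ω i) ω ∂μ := rfl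
    rw [h1, ← integral_condExp (μ := μ) (f := f * fun ω => W' ω i) hm]
    have h2 : μ[f * fun ω => W' ω i|m0]
        =ᵐ[μ] fun ω => f ω * (∑ j, (1 - Λ) i j * W ω j) := by
      refine hmul.trans ?_
      have := hcond i
      filter_upwards [this] with ω hω
      show f ω * (μ[fun ω => W' ω i|m0]) ω = _
      rw [hω]
    exact integral_congr_ae h2
  -- define the gradient vector
  set G : Fin k → ℝ := fun i => ∫ ω, W ω i * f ω ∂μ with hGdef
  -- key identity
  have hkey : ∀ i, (Λ.mulVec G) i
      = (1/2) * ∫ ω, (f ω - f' ω) * (W ω i - W' ω i) ∂μ := by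
    intro i
    have hA1 : ∫ ω, f ω * (W ω i - W' ω i) ∂μ = (Λ.mulVec G) i := by
      have i1 : Integrable (fun ω => f ω * W ω i) μ :=
        (hWexp i).congr (ae_of_all _ fun ω => mul_comm _ _)
      have i2 : Integrable (fun ω => f ω * W' ω i) μ :=
        (hW'exp i).congr (ae_of_all _ fun ω => mul_comm _ _)
      have : (fun ω => f ω * (W ω i - W' ω i))
          = fun ω => f ω * W ω i - f ω * W' ω i := by funext ω; ring
      rw [this, integral_sub i1 i2]
      have e2 : ∫ ω, f ω * W' ω i ∂μ = ∑ j, (1 - Λ) i j * G j := by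
        rw [hcondint i]
        have : (fun ω => f ω * (∑ j, (1 - Λ) i j * W ω j))
            = fun ω => ∑ j, (1 - Λ) i j * (W ω j * f ω) := by
          funext ω
          rw [Finset.mul_sum]
          apply Finset.sum_congr rfl
          intro j _
          ring
        rw [this, integral_finset_sum _ (fun j _ => ((hWexp j).const_mul _))]
        apply Finset.sum_congr rfl
        intro j _
        rw [integral_const_mul]
      have e1 : ∫ ω, f ω * W ω i ∂μ = G i := by
        rw [hGdef]
        apply integral_congr_ae
        filter_upwards with ω
        ring
      rw [e1, e2]
      show G i - ∑ j, (1 - Λ) i j * G j = ∑ j, Λ i j * G j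
      have : ∀ j, (1 - Λ) i j * G j = (if i = j then G j else 0) - Λ i j * G j := by
        intro j
        rw [Matrix.sub_apply, Matrix.one_apply, sub_mul, ite_mul, one_mul, zero_mul]
      rw [Finset.sum_congr rfl (fun j _ => this j), Finset.sum_sub_distrib]
      rw [Finset.sum_ite_eq Finset.univ i (fun j => G j)]
      simp [Matrix.mulVec, dotProduct]
    have hA2 : ∫ ω, f ω * (W ω i - W' ω i) ∂μ = - ∫ ω, f' ω * (W ω i - W' ω i) ∂μ := by
      rw [hswap i, ← integral_neg]
      apply integral_congr_ae
      filter_upwards with ω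
      ring
    have hsub := integral_sub (hfd_int i) (hf'd_int i)
    have hsplit : ∫ ω, (f ω - f' ω) * (W ω i - W' ω i) ∂μ
        = (∫ ω, f ω * (W ω i - W' ω i) ∂μ) - ∫ ω, f' ω * (W ω i - W' ω i) ∂μ := by
      rw [← hsub]
      apply integral_congr_ae
      filter_upwards with ω
      ring
    rw [← hA1, hsplit]
    linarith [hA2]
  -- integrability of the difference integrand
  have hdiff_int : ∀ i, Integrable (fun ω => (f ω - f' ω) * (W ω i - W' ω i)) μ := by
    intro i
    have h1 : Integrable (fun ω => f ω * (W ω i - W' ω i) - f' ω * (W ω i - W' ω i)) μ :=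
      (hfd_int i).sub (hf'd_int i)
    refine h1.congr ?_
    filter_upwards with ω
    ring
  -- bound on norm2 of Λ G
  have hnormΛG : norm2 (Λ.mulVec G) ≤ (1/2) * (norm2 θ * K ^ 2 * ∫ ω, f ω ∂μ) := by
    have h1 : norm2 (Λ.mulVec G)
        = (1/2) * norm2 (fun i => ∫ ω, (f ω - f' ω) * (W ω i - W' ω i) ∂μ) := by
      have : Λ.mulVec G = fun i => (1/2) * ∫ ω, (f ω - f' ω) * (W ω i - W' ω i) ∂μ := by
        funext i; exact hkey i
      rw [this, norm2_smul_fun (1/2) (fun i => ∫ ω, (f ω - f' ω) * (W ω i - W' ω i) ∂μ)]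
      norm_num
    rw [h1]
    have h2 : norm2 (fun i => ∫ ω, (f ω - f' ω) * (W ω i - W' ω i) ∂μ)
        ≤ ∫ ω, norm2 (fun i => (f ω - f' ω) * (W ω i - W' ω i)) ∂μ :=
      norm2_integral_le μ _ hdiff_int
    have h3 : ∫ ω, norm2 (fun i => (f ω - f' ω) * (W ω i - W' ω i)) ∂μ
        ≤ ∫ ω, norm2 θ * K ^ 2 * ((f ω + f' ω) / 2) ∂μ := by
      apply integral_mono_of_nonneg
      · filter_upwards with ω; exact norm2_nonneg _
      · have hint : Integrable (fun ω => f ω + f' ω) μ := (hmgf θ).add hf'int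
        have := hint.const_mul (norm2 θ * K ^ 2 / 2)
        refine this.congr ?_
        filter_upwards with ω
        ring
      · filter_upwards [hK] with ω hω
        have hD : norm2 (fun i => W ω i - W' ω i) ≤ K := hω
        have hDn : 0 ≤ norm2 (fun i => W ω i - W' ω i) := norm2_nonneg _
        rw [norm2_smul_fun]
        have hfd : |f ω - f' ω| ≤ |θ ⬝ᵥ W ω - θ ⬝ᵥ W' ω| * (f ω + f' ω) / 2 :=
          exp_sub_le _ _
        have hdot : |θ ⬝ᵥ W ω - θ ⬝ᵥ W' ω| ≤ norm2 θ * norm2 (fun i => W ω i - W' ω i) := by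
          have : θ ⬝ᵥ W ω - θ ⬝ᵥ W' ω = θ ⬝ᵥ (fun i => W ω i - W' ω i) := by
            simp only [dotProduct, ← Finset.sum_sub_distrib, mul_sub]
          rw [this]
          exact dotProduct_le_norm2 _ _
        have hff' : 0 ≤ f ω + f' ω := by positivity
        set D := norm2 (fun i => W ω i - W' ω i) with hDdef
        have hnt : 0 ≤ norm2 θ := norm2_nonneg θ
        have hc0 : 0 ≤ norm2 θ * (f ω + f' ω) / 2 :=
          div_nonneg (mul_nonneg hnt hff') (by norm_num)
        calc |f ω - f' ω| * D ≤ (|θ ⬝ᵥ W ω - θ ⬝ᵥ W' ω| * (f ω + f' ω) / 2) * D :=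
              mul_le_mul_of_nonneg_right hfd hDn
          _ ≤ ((norm2 θ * D) * (f ω + f' ω) / 2) * D := by
              gcongr
          _ = norm2 θ * (f ω + f' ω) / 2 * (D * D) := by ring
          _ ≤ norm2 θ * (f ω + f' ω) / 2 * (K * K) :=
              mul_le_mul_of_nonneg_left (mul_le_mul hD hD hDn hK0) hc0
          _ = norm2 θ * K ^ 2 * ((f ω + f' ω) / 2) := by ring
    have h4 : ∫ ω, norm2 θ * K ^ 2 * ((f ω + f' ω) / 2) ∂μ
        = norm2 θ * K ^ 2 * ∫ ω, f ω ∂μ := by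
      have e1 : (fun ω => norm2 θ * K ^ 2 * ((f ω + f' ω) / 2))
          = fun ω => (norm2 θ * K ^ 2 / 2) * (f ω + f' ω) := by funext ω; ring
      rw [e1, integral_const_mul, integral_add (hmgf θ) hf'int, hintf']
      ring
    have := le_trans h2 (le_trans h3 (le_of_eq h4))
    linarith
  -- conclude
  have hσ : 0 < smallestSingularValue Λ := ssv_pos hk Λ hΛ
  have hfinal : smallestSingularValue Λ * norm2 G ≤ norm2 (Λ.mulVec G) := ssv_mul_le Λ G
  have hGle : norm2 G ≤ (1 / smallestSingularValue Λ) * ((1/2) * (norm2 θ * K ^ 2 * ∫ ω, f ω ∂μ)) := by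
    rw [one_div, inv_mul_eq_div, le_div_iff₀ hσ, mul_comm]
    exact le_trans hfinal hnormΛG
  calc norm2 G ≤ (1 / smallestSingularValue Λ) * ((1/2) * (norm2 θ * K ^ 2 * ∫ ω, f ω ∂μ)) := hGle
    _ = (K ^ 2 * norm2 θ * (1 / smallestSingularValue Λ) / 2) * ∫ ω, f ω ∂μ := by ring
end

section
/- Let Λ be the d×d lower bidiagonal matrix with Λ_{ii} = i/n, Λ_{i,i−1} = −i/n for i ≥ 2, and zeros elsewhere. Then the smallest singular value satisfies σ₁(Λ)² ≥ κ_d n^{−2}, where κ_d = (d!)² 3^{d−1} / (d(d+1)(2d+1))^{d−1}. -/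
open Matrix

section auxLemmas
open Finset

open Finset

-- partial sum bound
lemma Ssum_le (m : ℕ) (hm : 1 ≤ m) :
    (∑ j ∈ range m, (1:ℝ)/((j:ℝ)+1)^2) ≤ 2 - 1/(m:ℝ) := by
  induction m with
  | zero => omega
  | succ k ih =>
    rcases Nat.eq_or_lt_of_le hm with h | h
    · simp [← h]
      norm_num
    · have hk : 1 ≤ k := by omega
      have hk' : (0:ℝ) < k := by positivity
      rw [Finset.sum_range_succ]
      have h2 : (1:ℝ)/((k:ℝ)+1)^2 ≤ 1/(k:ℝ) - 1/((k:ℝ)+1) := by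
        rw [div_sub_div _ _ (ne_of_gt hk') (by positivity)]
        rw [div_le_div_iff₀ (by positivity) (by positivity)]
        push_cast
        ring_nf
        nlinarith [hk']
      have := ih hk
      push_cast
      linarith

lemma fact_le_pow (d : ℕ) (hd : 1 ≤ d) : (d.factorial : ℝ) ≤ (d:ℝ)^(d-1) := by
  induction d with
  | zero => omega
  | succ k ih =>
    rcases Nat.eq_or_lt_of_le hd with h | h
    · have hk0 : k = 0 := by omega
      subst hk0; simp [Nat.factorial]
    · have hk : 1 ≤ k := by omega
      have := ih hk
      have hkpos : (0:ℝ) < k := by positivity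
      have h1 : ((k+1).factorial : ℝ) = (k+1) * k.factorial := by
        push_cast [Nat.factorial_succ]; ring
      rw [h1]
      have h2 : (k:ℝ)^(k-1) ≤ ((k:ℝ)+1)^(k-1) := by
        apply pow_le_pow_left₀ (le_of_lt hkpos) (by linarith)
      have h3 : ((k:ℝ)+1)^(k-1) ≤ ((k:ℝ)+1)^(k+1-1) := by
        apply pow_le_pow_right₀ (by linarith) (by omega)
      push_cast
      calc ((k:ℝ)+1) * k.factorial ≤ ((k:ℝ)+1) * (k:ℝ)^(k-1) := by nlinarith [this, hkpos]
        _ ≤ ((k:ℝ)+1) * ((k:ℝ)+1)^(k-1) := by nlinarith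
        _ = ((k:ℝ)+1)^(k-1+1) := by ring
        _ = ((k:ℝ)+1)^(k+1-1) := by congr 1; omega

lemma key_ineq (d : ℕ) (hd : 1 ≤ d) :
    (∑ k ∈ range d, ∑ j ∈ range (k+1), (1:ℝ)/((j:ℝ)+1)^2)
      ≤ ((d:ℝ)*((d:ℝ)+1)*(2*(d:ℝ)+1))^(d-1) / ((d.factorial:ℝ)^2 * 3^(d-1)) := by
  rcases le_or_gt d 3 with h3 | h3
  · interval_cases d <;>
      norm_num [Finset.sum_range_succ, Nat.factorial]
  · -- d ≥ 4
    have hd4 : 4 ≤ d := h3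
    have hT : (∑ k ∈ range d, ∑ j ∈ range (k+1), (1:ℝ)/((j:ℝ)+1)^2) ≤ 2*(d:ℝ) - 1 := by
      have h1 : ∀ k ∈ range d, (∑ j ∈ range (k+1), (1:ℝ)/((j:ℝ)+1)^2) ≤ 2 - 1/((k:ℝ)+1) := by
        intro k _
        have := Ssum_le (k+1) (by omega)
        push_cast at this
        linarith
      calc (∑ k ∈ range d, ∑ j ∈ range (k+1), (1:ℝ)/((j:ℝ)+1)^2)
          ≤ ∑ k ∈ range d, (2 - 1/((k:ℝ)+1)) := Finset.sum_le_sum h1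
        _ = 2*(d:ℝ) - ∑ k ∈ range d, 1/((k:ℝ)+1) := by
            rw [Finset.sum_sub_distrib, Finset.sum_const, Finset.card_range]
            push_cast; ring
        _ ≤ 2*(d:ℝ) - 1 := by
            have h0 : (0:ℕ) ∈ range d := by simp; omega
            have := Finset.single_le_sum (f := fun k : ℕ => 1/((k:ℝ)+1))
              (fun i _ => by positivity) h0
            simp only [one_div] at this ⊢
            linarith
    have hdpos : (0:ℝ) < d := by positivity
    have hM : 2*(d:ℝ) - 1 ≤ ((d:ℝ)*((d:ℝ)+1)*(2*(d:ℝ)+1))^(d-1) / ((d.factorial:ℝ)^2 * 3^(d-1)) := by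
      rw [le_div_iff₀ (by positivity)]
      have hd4' : (4:ℝ) ≤ (d:ℝ) := by exact_mod_cast hd4
      have hfact : ((d.factorial:ℝ))^2 ≤ ((d:ℝ)^(d-1))^2 :=
        pow_le_pow_left₀ (Nat.cast_nonneg _) (fact_le_pow d hd) 2
      have step1 : (2*(d:ℝ)-1) * ((d.factorial:ℝ)^2 * 3^(d-1))
          ≤ (2*(d:ℝ)) * (((d:ℝ)^(d-1))^2 * 3^(d-1)) := by
        have h3p : (0:ℝ) < (3:ℝ)^(d-1) := by positivity
        have hfp : (0:ℝ) < ((d.factorial:ℝ))^2 := by positivity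
        have e1 : ((d.factorial:ℝ)^2 * 3^(d-1)) ≤ (((d:ℝ)^(d-1))^2 * 3^(d-1)) :=
          mul_le_mul_of_nonneg_right hfact (le_of_lt h3p)
        have e2 : (0:ℝ) ≤ ((d:ℝ)^(d-1))^2 * 3^(d-1) := by positivity
        nlinarith [e1, e2, hfp]
      have step2 : (2*(d:ℝ)) * (((d:ℝ)^(d-1))^2 * 3^(d-1))
          ≤ ((d:ℝ)*((d:ℝ)+1)*(2*(d:ℝ)+1))^(d-1) := by
        have e1 : (((d:ℝ)^(d-1))^2 * 3^(d-1)) = (3*(d:ℝ)^2)^(d-1) := by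
          rw [← pow_mul, mul_comm (d-1) 2, pow_mul, mul_pow]
          ring
        rw [e1]
        have h2d : 2*(d:ℝ) ≤ (2*(d:ℝ)/3)^(d-1) := by
          have b1 : (2*(d:ℝ)/3)^3 ≤ (2*(d:ℝ)/3)^(d-1) := by
            apply pow_le_pow_right₀ (by linarith) (by omega)
          have b2 : 2*(d:ℝ) ≤ (2*(d:ℝ)/3)^3 := by
            nlinarith [mul_nonneg (sub_nonneg.mpr hd4') (by linarith : (0:ℝ) ≤ (d:ℝ)+4), hdpos]
          linarith
        calc (2*(d:ℝ)) * (3*(d:ℝ)^2)^(d-1)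
            ≤ (2*(d:ℝ)/3)^(d-1) * (3*(d:ℝ)^2)^(d-1) := by
              apply mul_le_mul_of_nonneg_right h2d (by positivity)
          _ = (2*(d:ℝ)^3)^(d-1) := by
              rw [← mul_pow]; congr 1; ring
          _ ≤ ((d:ℝ)*((d:ℝ)+1)*(2*(d:ℝ)+1))^(d-1) := by
              apply pow_le_pow_left₀ (by positivity) (by nlinarith)
        
      linarith
    linarith



variable (n d : ℕ)

lemma core_bound (hn : 0 < n) (hd : 1 ≤ d)
    (Λ : Matrix (Fin d) (Fin d) ℝ)
    (hΛ : ∀ i j : Fin d, Λ i j =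
      if i = j then (((i : ℕ) + 1 : ℝ)) / (n : ℝ)
      else if (j : ℕ) + 1 = (i : ℕ) then -((((i : ℕ) + 1 : ℝ)) / (n : ℝ)) else 0)
    (x : Fin d → ℝ) (hx : ∑ i, x i ^ 2 = 1) :
    1 ≤ ((n:ℝ)^2 * ∑ k ∈ range d, ∑ j ∈ range (k+1), (1:ℝ)/((j:ℝ)+1)^2)
        * ∑ i, (Λ.mulVec x) i ^ 2 := by
  classical
  set y : Fin d → ℝ := Λ.mulVec x with hy
  set X : ℕ → ℝ := fun k => if h : k < d then x ⟨k, h⟩ else 0 with hX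
  set Y : ℕ → ℝ := fun k => if h : k < d then y ⟨k, h⟩ else 0 with hYdef
  have hnR : (0:ℝ) < n := by exact_mod_cast hn
  -- step 1: formula for Y
  have hYk : ∀ k (hk : k < d),
      Y k = (((k:ℝ)+1)/n) * (X k - (if k = 0 then 0 else X (k-1))) := by
    intro k hk
    set i0 : Fin d := ⟨k, hk⟩ with hi0
    have hYv : Y k = y i0 := by simp [hYdef, hk, hi0]
    rw [hYv]
    have hyval : y i0 = ∑ j, Λ i0 j * x j := by
      simp [hy, Matrix.mulVec, dotProduct]
    set A : ℝ := (((k:ℝ)+1)/n) with hA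
    have hsplit : ∀ j : Fin d, Λ i0 j * x j =
        (if j = i0 then A * x j else 0) + (if (j:ℕ) + 1 = k then -(A * x j) else 0) := by
      intro j
      rw [hΛ]
      rcases eq_or_ne i0 j with h | h
      · subst h
        simp [hA, hi0]
      · have hji : j ≠ i0 := fun hh => h hh.symm
        by_cases h2 : (j:ℕ) + 1 = (i0:ℕ)
        · have : (j:ℕ) + 1 = k := h2
          rw [if_neg h, if_pos h2, if_neg hji, if_pos this]
          simp [h, hji, h2, this, hA, hi0]
        · have : ¬ ((j:ℕ) + 1 = k) := h2
          simp [h, hji, h2, this]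
    rw [hyval, Finset.sum_congr rfl (fun j _ => hsplit j), Finset.sum_add_distrib]
    have e1 : (∑ j : Fin d, if j = i0 then A * x j else 0) = A * x i0 := by
      simp
    have e2 : (∑ j : Fin d, if (j:ℕ) + 1 = k then -(A * x j) else 0)
        = - (A * (if k = 0 then 0 else X (k-1))) := by
      rcases Nat.eq_zero_or_pos k with hk0 | hk0
      · subst hk0
        simp
      · have hm : k - 1 < d := by omega
        set j0 : Fin d := ⟨k-1, hm⟩ with hj0
        rw [Finset.sum_eq_single j0]
        · have : (j0:ℕ) + 1 = k := by simp [hj0]; omega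
          rw [if_pos this]
          have hkne : ¬ (k = 0) := by omega
          rw [if_neg hkne]
          have : X (k-1) = x j0 := by simp [hX, hm, hj0]
          rw [this]
        · intro b _ hb
          apply if_neg
          intro hbc
          apply hb
          apply Fin.ext
          simp [hj0]
          omega
        · intro h; exact absurd (Finset.mem_univ j0) h
    rw [e1, e2]
    have hXk : X k = x i0 := by simp [hX, hk, hi0]
    rw [hXk]
    ring
  -- step 2: reconstruction
  have hrec : ∀ k, k < d → X k = ∑ j ∈ range (k+1), ((n:ℝ)/((j:ℝ)+1)) * Y j := by
    intro k
    induction k with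
    | zero =>
      intro hk
      have := hYk 0 hk
      simp at this
      rw [Finset.sum_range_one]
      rw [this]
      field_simp
      simp
    | succ m ih =>
      intro hk
      have hm : m < d := by omega
      have h1 := hYk (m+1) hk
      have h2 : ¬ (m + 1 = 0) := by omega
      rw [if_neg h2] at h1
      have h3 : m + 1 - 1 = m := by omega
      rw [h3] at h1
      rw [Finset.sum_range_succ, ← ih hm]
      have hpos : (0:ℝ) < ((m:ℝ)+1+1) := by positivity
      push_cast at h1 ⊢
      field_simp at h1 ⊢
      linarith
  -- step 3: Cauchy–Schwarz per coordinate
  set B : ℝ := ∑ j ∈ range d, (Y j)^2 with hB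
  have hBnn : 0 ≤ B := Finset.sum_nonneg fun j _ => sq_nonneg _
  have hCS : ∀ k, k < d →
      (X k)^2 ≤ ((n:ℝ)^2 * ∑ j ∈ range (k+1), (1:ℝ)/((j:ℝ)+1)^2) * B := by
    intro k hk
    rw [hrec k hk]
    have cs := Finset.sum_mul_sq_le_sq_mul_sq (range (k+1))
      (fun j => (n:ℝ)/((j:ℝ)+1)) (fun j => Y j)
    have e1 : (∑ j ∈ range (k+1), ((n:ℝ)/((j:ℝ)+1))^2)
        = (n:ℝ)^2 * ∑ j ∈ range (k+1), (1:ℝ)/((j:ℝ)+1)^2 := by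
      rw [Finset.mul_sum]
      apply Finset.sum_congr rfl
      intro j _
      rw [div_pow]
      ring
    have e2 : (∑ j ∈ range (k+1), (Y j)^2) ≤ B := by
      apply Finset.sum_le_sum_of_subset_of_nonneg
      · exact Finset.range_subset_range.mpr (by omega)
      · intro j _ _; exact sq_nonneg _
    calc (∑ j ∈ range (k+1), ((n:ℝ)/((j:ℝ)+1)) * Y j)^2
        ≤ (∑ j ∈ range (k+1), ((n:ℝ)/((j:ℝ)+1))^2) * (∑ j ∈ range (k+1), (Y j)^2) := cs
      _ ≤ (∑ j ∈ range (k+1), ((n:ℝ)/((j:ℝ)+1))^2) * B := by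
          apply mul_le_mul_of_nonneg_left e2
          exact Finset.sum_nonneg fun j _ => sq_nonneg _
      _ = ((n:ℝ)^2 * ∑ j ∈ range (k+1), (1:ℝ)/((j:ℝ)+1)^2) * B := by rw [e1]
  -- step 4: sum up
  have hxX : (∑ i, x i ^ 2) = ∑ k ∈ range d, (X k)^2 := by
    rw [← Fin.sum_univ_eq_sum_range (fun k => (X k)^2) d]
    apply Finset.sum_congr rfl
    intro i _
    congr 1
    simp [hX, i.isLt]
  have hyY : (∑ i, y i ^ 2) = B := by
    rw [hB, ← Fin.sum_univ_eq_sum_range (fun k => (Y k)^2) d]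
    apply Finset.sum_congr rfl
    intro i _
    congr 1
    simp [hYdef, i.isLt]
  have main : (1:ℝ) ≤ ∑ k ∈ range d,
      ((n:ℝ)^2 * ∑ j ∈ range (k+1), (1:ℝ)/((j:ℝ)+1)^2) * B :=
    calc (1:ℝ) = ∑ i, x i ^ 2 := hx.symm
      _ = ∑ k ∈ range d, (X k)^2 := hxX
      _ ≤ _ := Finset.sum_le_sum fun k hk => hCS k (Finset.mem_range.mp hk)
  calc (1:ℝ) ≤ ∑ k ∈ range d,
      ((n:ℝ)^2 * ∑ j ∈ range (k+1), (1:ℝ)/((j:ℝ)+1)^2) * B := main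
    _ = ((n:ℝ)^2 * ∑ k ∈ range d, ∑ j ∈ range (k+1), (1:ℝ)/((j:ℝ)+1)^2)
        * B := by
      rw [← Finset.sum_mul, ← Finset.mul_sum]
    _ = ((n:ℝ)^2 * ∑ k ∈ range d, ∑ j ∈ range (k+1), (1:ℝ)/((j:ℝ)+1)^2)
        * ∑ i, y i ^ 2 := by rw [hyY]



lemma sum_sq_lower (n d : ℕ) (hn : 0 < n) (hd : 1 ≤ d)
    (Λ : Matrix (Fin d) (Fin d) ℝ)
    (hΛ : ∀ i j : Fin d, Λ i j =
      if i = j then (((i : ℕ) + 1 : ℝ)) / (n : ℝ)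
      else if (j : ℕ) + 1 = (i : ℕ) then -((((i : ℕ) + 1 : ℝ)) / (n : ℝ)) else 0)
    (x : Fin d → ℝ) (hx : ∑ i, x i ^ 2 = 1) :
    ((Nat.factorial d : ℝ) ^ 2 * 3 ^ (d - 1) /
        ((d : ℝ) * ((d:ℝ) + 1) * (2 * (d:ℝ) + 1)) ^ (d - 1)) / (n : ℝ) ^ 2
      ≤ ∑ i, (Λ.mulVec x) i ^ 2 := by
  have hnR : (0:ℝ) < n := by exact_mod_cast hn
  have hdR : (0:ℝ) < d := by exact_mod_cast hd
  have hfpos : (0:ℝ) < (Nat.factorial d : ℝ) := by exact_mod_cast d.factorial_pos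
  have hFpos : (0:ℝ) < (Nat.factorial d : ℝ) ^ 2 * 3 ^ (d - 1) := by positivity
  have hDpos : (0:ℝ) < ((d:ℝ) * ((d:ℝ) + 1) * (2 * (d:ℝ) + 1)) ^ (d - 1) :=
    pow_pos (mul_pos (mul_pos hdR (by linarith)) (by linarith)) _
  have hTpos : (0:ℝ) < ∑ k ∈ range d, ∑ j ∈ range (k+1), (1:ℝ)/((j:ℝ)+1)^2 := by
    apply Finset.sum_pos
    · intro k _
      apply Finset.sum_pos
      · intro j _; positivity
      · exact Finset.nonempty_range_iff.mpr (by omega)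
    · exact Finset.nonempty_range_iff.mpr (by omega)
  set F : ℝ := (Nat.factorial d : ℝ) ^ 2 * 3 ^ (d - 1)
  set Dp : ℝ := ((d:ℝ) * ((d:ℝ) + 1) * (2 * (d:ℝ) + 1)) ^ (d - 1)
  set T : ℝ := ∑ k ∈ range d, ∑ j ∈ range (k+1), (1:ℝ)/((j:ℝ)+1)^2
  have hTM : T ≤ Dp / F := key_ineq d hd
  have hκ : F / Dp / (n:ℝ)^2 ≤ 1 / ((n:ℝ)^2 * T) := by
    rw [div_div, div_le_div_iff₀ (mul_pos hDpos (by positivity)) (mul_pos (by positivity) hTpos)]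
    have h1 : (n:ℝ)^2 * T ≤ (n:ℝ)^2 * (Dp / F) :=
      mul_le_mul_of_nonneg_left hTM (by positivity)
    have h2 : F * ((n:ℝ)^2 * (Dp / F)) = Dp * (n:ℝ)^2 := by
      field_simp
    calc F * ((n:ℝ)^2 * T) ≤ F * ((n:ℝ)^2 * (Dp / F)) :=
          mul_le_mul_of_nonneg_left h1 (le_of_lt hFpos)
      _ = Dp * (n:ℝ)^2 := h2
      _ = 1 * (Dp * (n:ℝ)^2) := by ring
  have hcore := core_bound n d hn hd Λ hΛ x hx
  have h2 : 1 / ((n:ℝ)^2 * T) ≤ ∑ i, (Λ.mulVec x) i ^ 2 := by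
    rw [div_le_iff₀ (mul_pos (by positivity) hTpos)]
    calc (1:ℝ) ≤ ((n:ℝ)^2 * T) * ∑ i, (Λ.mulVec x) i ^ 2 := hcore
      _ = (∑ i, (Λ.mulVec x) i ^ 2) * ((n:ℝ)^2 * T) := by ring
  linarith

end auxLemmas

/-- For the lower bidiagonal matrix `Λ` with `Λ_{ii} = i/n` and `Λ_{i,i-1} = -i/n`
(written with 0-based `Fin d` indexing), the smallest singular value satisfies
`σ₁(Λ)² ≥ κ_d n⁻²` where `κ_d = (d!)² 3^{d-1} / (d(d+1)(2d+1))^{d-1}`. -/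
theorem ustat_lambda_sigma1_bound (n d : ℕ) (hn : 0 < n) (hd : 1 ≤ d)
    (Λ : Matrix (Fin d) (Fin d) ℝ)
    (hΛ : ∀ i j : Fin d, Λ i j =
      if i = j then (((i : ℕ) + 1 : ℝ)) / (n : ℝ)
      else if (j : ℕ) + 1 = (i : ℕ) then -((((i : ℕ) + 1 : ℝ)) / (n : ℝ)) else 0) :
    smallestSingularValue Λ ^ 2 ≥
      ((Nat.factorial d : ℝ) ^ 2 * 3 ^ (d - 1) /
          ((d : ℝ) * (d + 1) * (2 * d + 1)) ^ (d - 1)) / (n : ℝ) ^ 2 := by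
  classical
  set κ : ℝ := ((Nat.factorial d : ℝ) ^ 2 * 3 ^ (d - 1) /
      ((d : ℝ) * ((d:ℝ) + 1) * (2 * (d:ℝ) + 1)) ^ (d - 1)) / (n : ℝ) ^ 2 with hκdef
  have hκnn : 0 ≤ κ := by
    have hdR : (0:ℝ) < d := by exact_mod_cast hd
    have hnR : (0:ℝ) < n := by exact_mod_cast hn
    have hDpos : (0:ℝ) < ((d:ℝ) * ((d:ℝ) + 1) * (2 * (d:ℝ) + 1)) ^ (d - 1) :=
      pow_pos (mul_pos (mul_pos hdR (by linarith)) (by linarith)) _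
    positivity
  have hlow : ∀ x : Fin d → ℝ, norm2 x = 1 → Real.sqrt κ ≤ norm2 (Λ.mulVec x) := by
    intro x hx1
    have hxsq : (∑ i, x i ^ 2) = 1 := by
      have h0 : (0:ℝ) ≤ ∑ i, x i ^ 2 := Finset.sum_nonneg fun i _ => sq_nonneg _
      have h := Real.sq_sqrt h0
      rw [show Real.sqrt (∑ i, x i ^ 2) = 1 from hx1] at h
      simpa using h.symm
    exact Real.sqrt_le_sqrt (sum_sq_lower n d hn hd Λ hΛ x hxsq)
  have hne : ∃ r, r ∈ {r | ∃ x : Fin d → ℝ, norm2 x = 1 ∧ r = norm2 (Λ.mulVec x)} := by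
    refine ⟨norm2 (Λ.mulVec (fun i => if i = (⟨0, hd⟩ : Fin d) then 1 else 0)),
      (fun i => if i = (⟨0, hd⟩ : Fin d) then 1 else 0), ?_, rfl⟩
    unfold norm2
    have h1 : ∀ i : Fin d, (if i = (⟨0, hd⟩ : Fin d) then (1:ℝ) else 0)^2
        = if i = (⟨0, hd⟩ : Fin d) then 1 else 0 := by
      intro i; split <;> norm_num
    rw [Finset.sum_congr rfl fun i _ => h1 i]
    simp
  have hle : Real.sqrt κ ≤ smallestSingularValue Λ := by
    apply le_csInf hne
    rintro r ⟨x, hx1, rfl⟩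
    exact hlow x hx1
  have hsq : Real.sqrt κ ^ 2 = κ := Real.sq_sqrt hκnn
  calc κ = Real.sqrt κ ^ 2 := hsq.symm
    _ ≤ smallestSingularValue Λ ^ 2 := pow_le_pow_left₀ (Real.sqrt_nonneg _) hle 2
end

section
/- Let X₁,…,Xₙ be i.i.d. random variables and ψ: ℝ^d → ℝ a symmetric measurable function with ‖ψ‖_∞ ≤ b, Eψ(X₁,…,X_d) = 0, and P(E(ψ(X₁,…,X_d)|X₁) = 0) < 1. Let W_d = n^{1/2} (n choose d)^{-1} Σ_{j₁<⋯<j_d} ψ(X_{j₁},…,X_{j_d}). Then for all t > 0, P(W_d ≥ t) ≤ exp(−t² κ_d^{1/2} / (8b²γ_d²)) and P(W_d ≤ −t) ≤ exp(−t² κ_d^{1/2} / (8b²γ_d²)), where γ_d = (d(d+1)(2d+1)/6)^{1/2} and κ_d = (d!)² 3^{d−1} / (d(d+1)(2d+1))^{d−1}. -/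
open MeasureTheory ProbabilityTheory Real

namespace UstatAux

open Finset


open Finset

variable {Ω : Type*} [MeasurableSpace Ω] {μ : Measure Ω}

lemma integrable_exp_bdd [IsProbabilityMeasure μ] {Z : Ω → ℝ} (hZ : Measurable Z)
    {c : ℝ} (h : ∀ ω, |Z ω| ≤ c) (u : ℝ) :
    Integrable (fun ω => Real.exp (u * Z ω)) μ := by
  refine ⟨((hZ.const_mul u).exp).aestronglyMeasurable, ?_⟩
  refine HasFiniteIntegral.of_bounded (C := Real.exp (|u| * c)) ?_
  filter_upwards with ω
  rw [Real.norm_eq_abs, abs_of_pos (Real.exp_pos _)]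
  apply Real.exp_le_exp.2
  calc u * Z ω ≤ |u * Z ω| := le_abs_self _
    _ = |u| * |Z ω| := abs_mul _ _
    _ ≤ |u| * c := mul_le_mul_of_nonneg_left (h ω) (abs_nonneg u)

lemma integrable_bdd [IsProbabilityMeasure μ] {Z : Ω → ℝ} (hZ : Measurable Z)
    {c : ℝ} (h : ∀ ω, |Z ω| ≤ c) : Integrable Z μ := by
  refine ⟨hZ.aestronglyMeasurable, ?_⟩
  exact HasFiniteIntegral.of_bounded (C := c) (by filter_upwards with ω; simpa using h ω)

lemma hoeffding_mgf [IsProbabilityMeasure μ] {Z : Ω → ℝ} (hZ : Measurable Z)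
    {b : ℝ} (hb : 0 < b) (hbd : ∀ ω, |Z ω| ≤ b) (hmean : ∫ ω, Z ω ∂μ = 0) (u : ℝ) :
    ∫ ω, Real.exp (u * Z ω) ∂μ ≤ Real.exp (u ^ 2 * b ^ 2 / 2) := by
  set c := u * b with hc
  have key : ∀ y : ℝ, |y| ≤ b → Real.exp (u * y) ≤ Real.cosh c + (y / b) * Real.sinh c := by
    intro y hy
    have hy1 : -b ≤ y := (abs_le.1 hy).1
    have hy2 : y ≤ b := (abs_le.1 hy).2
    have h1 : (0:ℝ) ≤ (b + y) / (2 * b) := div_nonneg (by linarith) (by linarith)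
    have h2 : (0:ℝ) ≤ (b - y) / (2 * b) := div_nonneg (by linarith) (by linarith)
    have hbne : b ≠ 0 := ne_of_gt hb
    have h3 : (b + y) / (2 * b) + (b - y) / (2 * b) = 1 := by field_simp; ring
    have hconv := convexOn_exp.2 (Set.mem_univ c) (Set.mem_univ (-c)) h1 h2 h3
    simp only [smul_eq_mul] at hconv
    have harg : (b + y) / (2 * b) * c + (b - y) / (2 * b) * (-c) = u * y := by
      rw [hc]
      field_simp
      ring
    rw [harg] at hconv
    refine hconv.trans_eq ?_
    rw [Real.cosh_eq, Real.sinh_eq]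
    field_simp
    ring
  have hint : Integrable (fun ω => Real.exp (u * Z ω)) μ := integrable_exp_bdd hZ hbd u
  have hZint : Integrable Z μ := integrable_bdd hZ hbd
  have hint2 : Integrable (fun ω => Real.cosh c + Z ω / b * Real.sinh c) μ :=
    (integrable_const _).add ((hZint.div_const b).mul_const _)
  have h2 : ∫ ω, Real.exp (u * Z ω) ∂μ ≤ ∫ ω, (Real.cosh c + (Z ω / b) * Real.sinh c) ∂μ :=
    integral_mono hint hint2 (fun ω => key (Z ω) (hbd ω))
  have h3 : ∫ ω, (Real.cosh c + (Z ω / b) * Real.sinh c) ∂μ = Real.cosh c := by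
    rw [integral_add (integrable_const _) ((hZint.div_const b).mul_const _),
      integral_const]
    simp only [probReal_univ, one_smul]
    rw [integral_mul_const, integral_div, hmean]
    simp
  have h4 : Real.cosh c ≤ Real.exp (c ^ 2 / 2) := Real.cosh_le_exp_half_sq c
  have h5 : c ^ 2 / 2 = u ^ 2 * b ^ 2 / 2 := by rw [hc]; ring
  rw [h5] at h4
  exact (h2.trans_eq h3).trans h4

lemma sqrt_kappa_le {d : ℕ} (hd : 0 < d) :
    Real.sqrt ((Nat.factorial d : ℝ) ^ 2 * 3 ^ (d - 1) /
        ((d : ℝ) * (d + 1) * (2 * d + 1)) ^ (d - 1))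
      ≤ 2 * ((d : ℝ) * (d + 1) * (2 * d + 1) / 6) / d := by
  have hd1 : (1:ℝ) ≤ (d:ℝ) := by exact_mod_cast hd
  set D : ℝ := (d : ℝ) * (d + 1) * (2 * d + 1) with hD
  have hDpos : 0 < D := by
    have h0 : (0:ℝ) < (d:ℝ) := by linarith
    exact mul_pos (mul_pos h0 (by linarith)) (by linarith)
  have hG : (d:ℝ)^2 ≤ D / 3 := by
    rw [le_div_iff₀ (by norm_num : (0:ℝ) < 3), hD]
    nlinarith
  have hfac : ((d.factorial : ℝ))^2 ≤ (D / 3) ^ d := by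
    have hcast : (d.factorial : ℝ) = ∏ i ∈ Finset.range d, ((i:ℝ) + 1) := by
      rw [← Finset.prod_range_add_one_eq_factorial]
      push_cast
      rfl
    rw [hcast, ← Finset.prod_pow]
    have hpow : (D/3)^d = ∏ _i ∈ Finset.range d, (D/3) := by
      rw [Finset.prod_const, Finset.card_range]
    rw [hpow]
    refine Finset.prod_le_prod (fun i _ => by positivity) (fun i hi => ?_)
    have hi' : (i:ℝ) + 1 ≤ (d:ℝ) := by exact_mod_cast Nat.succ_le_of_lt (Finset.mem_range.1 hi)
    calc ((i:ℝ)+1)^2 ≤ (d:ℝ)^2 := by nlinarith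
      _ ≤ D/3 := hG
  have hdne : (d:ℝ) ≠ 0 := by linarith
  have hκ : (Nat.factorial d : ℝ) ^ 2 * 3 ^ (d - 1) / D ^ (d - 1)
      ≤ (2 * (D / 6) / d) ^ 2 := by
    have h2 : 2 * (D/6) / (d:ℝ) = D / (3*d) := by field_simp; ring
    rw [h2, div_pow, div_le_div_iff₀ (by positivity) (by positivity)]
    have h3 : (3:ℝ)^(d-1) * 9 = 3^(d+1) := by
      rw [show (9:ℝ) = 3^2 by norm_num, ← pow_add]
      congr 1
      omega
    have hmain : (d:ℝ)^2 * (d.factorial:ℝ)^2 ≤ (D/3)^(d+1) := by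
      have hps : (D/3)^(d+1) = (D/3) * (D/3)^d := by rw [pow_succ]; ring
      rw [hps]
      exact mul_le_mul hG hfac (by positivity) (by positivity)
    have hsplit : (D/3)^(d+1) = D^(d+1) / 3^(d+1) := div_pow D 3 (d+1)
    rw [hsplit] at hmain
    have h31 : (0:ℝ) < (3:ℝ)^(d+1) := by positivity
    have hmain' : ((d:ℝ)^2 * (d.factorial:ℝ)^2) * 3^(d+1) ≤ D^(d+1) :=
      (le_div_iff₀ h31).1 hmain
    have hpow : D^2 * D^(d-1) = D^(d+1) := by rw [← pow_add]; congr 1; omega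
    calc (d.factorial:ℝ)^2 * 3^(d-1) * (3*(d:ℝ))^2
        = ((d:ℝ)^2 * (d.factorial:ℝ)^2) * (3^(d-1) * 9) := by ring
      _ = ((d:ℝ)^2 * (d.factorial:ℝ)^2) * 3^(d+1) := by rw [h3]
      _ ≤ D^(d+1) := hmain'
      _ = D^2 * D^(d-1) := hpow.symm
  have h0 : 0 ≤ 2 * (D / 6) / (d:ℝ) := by positivity
  calc Real.sqrt ((Nat.factorial d : ℝ) ^ 2 * 3 ^ (d - 1) / D ^ (d - 1))
      ≤ Real.sqrt ((2 * (D/6)/(d:ℝ))^2) := Real.sqrt_le_sqrt hκ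
    _ = 2 * (D/6)/(d:ℝ) := Real.sqrt_sq h0



open Finset

lemma fiber_card {n d : ℕ} {β g : Fin d → Fin n}
    (hβ : Function.Injective β) (hg : Function.Injective g) :
    (univ.filter (fun σ : Equiv.Perm (Fin n) => (fun i => σ (β i)) = g)).card
      = (n - d).factorial := by
  classical
  have cardA : Fintype.card {y : Fin n // y ∉ Set.range β} = n - d := by
    rw [Fintype.card_subtype_compl]
    have h1 : Fintype.card {y : Fin n // y ∈ Set.range β} = d :=
      (Fintype.card_congr (Equiv.refl _)).trans
        ((Set.card_range_of_injective hβ).trans (Fintype.card_fin d))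
    rw [h1, Fintype.card_fin]
  have cardB : Fintype.card {y : Fin n // y ∉ Set.range g} = n - d := by
    rw [Fintype.card_subtype_compl]
    have h1 : Fintype.card {y : Fin n // y ∈ Set.range g} = d :=
      (Fintype.card_congr (Equiv.refl _)).trans
        ((Set.card_range_of_injective hg).trans (Fintype.card_fin d))
    rw [h1, Fintype.card_fin]
  -- the key equiv
  have hiff : ∀ (σ : Equiv.Perm (Fin n)), (fun i => σ (β i)) = g →
      ∀ y : Fin n, (y ∉ Set.range β ↔ σ y ∉ Set.range g) := by
    intro σ hσ y
    constructor
    · intro hy hmem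
      obtain ⟨i, hi⟩ := hmem
      exact hy ⟨i, σ.injective (by rw [← hi]; exact congrFun hσ i)⟩
    · intro hy hmem
      obtain ⟨i, hi⟩ := hmem
      exact hy ⟨i, by rw [← congrFun hσ i, hi]⟩
  let E : {σ : Equiv.Perm (Fin n) // (fun i => σ (β i)) = g}
      ≃ ({y : Fin n // y ∉ Set.range β} ≃ {y : Fin n // y ∉ Set.range g}) :=
    { toFun := fun σ => (σ.1.subtypeEquiv (hiff σ.1 σ.2))
      invFun := fun e =>
        ⟨((Equiv.sumCompl (· ∈ Set.range β)).symm.trans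
          ((((Equiv.ofInjective β hβ).symm.trans (Equiv.ofInjective g hg)).sumCongr e).trans
            (Equiv.sumCompl (· ∈ Set.range g)))), by
          funext i
          simp only [Equiv.trans_apply]
          rw [Equiv.sumCompl_symm_apply_of_pos ⟨i, rfl⟩]
          simp only [Equiv.sumCongr_apply, Sum.map_inl, Equiv.trans_apply]
          rw [show (⟨β i, ⟨i, rfl⟩⟩ : {y : Fin n // y ∈ Set.range β})
              = Equiv.ofInjective β hβ i from rfl]
          rw [Equiv.symm_apply_apply]
          rfl⟩
      left_inv := by
        rintro ⟨σ, hσ⟩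
        ext y
        simp only [Equiv.trans_apply]
        by_cases hy : y ∈ Set.range β
        · rw [Equiv.sumCompl_symm_apply_of_pos hy]
          simp only [Equiv.sumCongr_apply, Sum.map_inl, Equiv.trans_apply]
          obtain ⟨i, rfl⟩ := hy
          rw [show (⟨β i, ⟨i, rfl⟩⟩ : {y : Fin n // y ∈ Set.range β})
              = Equiv.ofInjective β hβ i from rfl]
          rw [Equiv.symm_apply_apply]
          have : (Equiv.sumCompl (· ∈ Set.range g)) (Sum.inl (Equiv.ofInjective g hg i)) = g i :=
            rfl
          rw [this, ← congrFun hσ i]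
        · rw [Equiv.sumCompl_symm_apply_of_neg hy]
          simp only [Equiv.sumCongr_apply, Sum.map_inr, Equiv.trans_apply]
          rfl
      right_inv := by
        intro e
        ext y
        simp only [Equiv.subtypeEquiv_apply]
        congr 1
        simp only [Equiv.trans_apply]
        rw [Equiv.sumCompl_symm_apply_of_neg y.2]
        rfl }
  rw [← Fintype.card_subtype]
  rw [Fintype.card_congr E, Fintype.card_equiv (Fintype.equivOfCardEq (by rw [cardA, cardB])),
    cardA]

lemma perm_sum_eq {n d : ℕ} {β : Fin d → Fin n} (hβ : Function.Injective β)
    (F : (Fin d → Fin n) → ℝ) :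
    ∑ σ : Equiv.Perm (Fin n), F (fun i => σ (β i))
      = (n - d).factorial •
        ∑ g ∈ univ.filter (fun g : Fin d → Fin n => Function.Injective g), F g := by
  classical
  rw [Finset.smul_sum]
  rw [← Finset.sum_fiberwise_of_maps_to
    (g := fun σ : Equiv.Perm (Fin n) => (fun i => σ (β i)))
    (t := univ.filter (fun g : Fin d → Fin n => Function.Injective g))
    (fun σ _ => Finset.mem_filter.2 ⟨Finset.mem_univ _,
      fun a b hab => hβ (σ.injective hab)⟩)
    (fun σ => F (fun i => σ (β i)))]
  refine Finset.sum_congr rfl fun g hg => ?_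
  have hginj : Function.Injective g := (Finset.mem_filter.1 hg).2
  rw [Finset.sum_congr rfl (fun σ hσ => by
      rw [show (fun i => σ (β i)) = g from (Finset.mem_filter.1 hσ).2]),
    Finset.sum_const, fiber_card hβ hginj]

lemma inj_sum_eq {n d : ℕ} (x : Fin n → ℝ) (ψ : (Fin d → ℝ) → ℝ)
    (hsym : ∀ (σ : Equiv.Perm (Fin d)) (v : Fin d → ℝ), ψ (v ∘ σ) = ψ v) :
    ∑ g ∈ univ.filter (fun g : Fin d → Fin n => Function.Injective g),
        ψ (fun i => x (g i))
      = d.factorial • ∑ f ∈ univ.filter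
          (fun f : Fin d → Fin n => ∀ i j : Fin d, i < j → f i < f j),
          ψ (fun i => x (f i)) := by
  classical
  rw [Finset.smul_sum]
  rw [← Finset.sum_fiberwise_of_maps_to
    (g := fun g : Fin d → Fin n => g ∘ (Tuple.sort g))
    (t := univ.filter (fun f : Fin d → Fin n => ∀ i j : Fin d, i < j → f i < f j))
    (fun g hg => Finset.mem_filter.2 ⟨Finset.mem_univ _, by
      intro i j hij
      exact ((Tuple.monotone_sort g).strictMono_of_injective
        (((Finset.mem_filter.1 hg).2).comp (Tuple.sort g).injective)) hij⟩)
    (fun g => ψ (fun i => x (g i)))]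
  refine Finset.sum_congr rfl fun f hf => ?_
  have hfmono : StrictMono f := fun a b hab => (Finset.mem_filter.1 hf).2 a b hab
  have hterm : ∀ g ∈ (univ.filter (fun g : Fin d → Fin n => Function.Injective g)).filter
      (fun g => g ∘ Tuple.sort g = f),
      ψ (fun i => x (g i)) = ψ (fun i => x (f i)) := by
    intro g hg
    obtain ⟨_, hg2⟩ := Finset.mem_filter.1 hg
    set τ : Equiv.Perm (Fin d) := (Tuple.sort g)⁻¹ with hτ
    have hgf : ∀ i, g i = f (τ i) := by
      intro i
      have h := congrFun hg2 (τ i)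
      simp only [Function.comp_apply, hτ, Equiv.Perm.coe_inv, Equiv.apply_symm_apply] at h
      rw [hτ]
      exact h
    calc ψ (fun i => x (g i)) = ψ ((fun i => x (f i)) ∘ ⇑τ) := by
          congr 1; funext i; rw [hgf i]; rfl
      _ = ψ (fun i => x (f i)) := hsym _ _
  rw [Finset.sum_congr rfl hterm, Finset.sum_const]
  congr 1
  have himg : (univ.filter (fun g : Fin d → Fin n => Function.Injective g)).filter
      (fun g => g ∘ Tuple.sort g = f)
      = Finset.image (fun τ : Equiv.Perm (Fin d) => f ∘ τ) univ := by
    ext g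
    simp only [Finset.mem_filter, Finset.mem_univ, true_and, Finset.mem_image]
    constructor
    · rintro ⟨hginj, hgs⟩
      refine ⟨(Tuple.sort g)⁻¹, ?_⟩
      funext i
      have h := congrFun hgs ((Tuple.sort g)⁻¹ i)
      simp only [Function.comp_apply, ] at h ⊢
      rw [← h]
      simp
    · rintro ⟨τ, rfl⟩
      refine ⟨hfmono.injective.comp τ.injective, ?_⟩
      have h1 : (f ∘ τ) ∘ (Tuple.sort (f ∘ τ)) = f ∘ (Tuple.sort f) :=
        Tuple.comp_perm_comp_sort_eq_comp_sort
      rw [h1, Tuple.sort_eq_refl_iff_monotone.2 hfmono.monotone]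
      rfl
  rw [himg]
  have hinj : Function.Injective (fun τ : Equiv.Perm (Fin d) => f ∘ ⇑τ) := fun τ τ' h =>
    Equiv.ext fun i => hfmono.injective (congrFun h i)
  rw [Finset.card_image_of_injective _ hinj, Finset.card_univ, Fintype.card_perm,
    Fintype.card_fin]



open Finset

lemma comp_mean_zero {Ω : Type*} [MeasurableSpace Ω] (μ : Measure Ω) [IsProbabilityMeasure μ]
    {n d : ℕ} (hdn : d ≤ n)
    (X : Fin n → Ω → ℝ) (hXmeas : ∀ i, Measurable (X i))
    (hindep : iIndepFun X μ)
    (hid : ∀ i j, IdentDistrib (X i) (X j) μ μ)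
    (ψ : (Fin d → ℝ) → ℝ) (hψmeas : Measurable ψ)
    (hmean : ∫ ω, ψ (fun i => X (Fin.castLE hdn i) ω) ∂μ = 0)
    {e : Fin d → Fin n} (he : Function.Injective e) :
    ∫ ω, ψ (fun i => X (e i) ω) ∂μ = 0 := by
  classical
  have hmap : ∀ (e : Fin d → Fin n), Function.Injective e →
      Measure.map (fun ω (i : Fin d) => X (e i) ω) μ
        = Measure.pi (fun i => μ.map (X (e i))) := by
    intro e he
    symm
    apply Measure.pi_eq
    intro s hs
    rw [Measure.map_apply (measurable_pi_lambda _ fun i => hXmeas _)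
      (MeasurableSet.univ_pi hs)]
    have hpre : (fun ω (i : Fin d) => X (e i) ω) ⁻¹' (Set.univ.pi s)
        = ⋂ i, X (e i) ⁻¹' (s i) := by
      ext ω; simp [Set.mem_pi]
    rw [hpre]
    set r : Fin n → Set ℝ := fun j => ⋂ i, ⋂ (_ : e i = j), s i with hr
    have hrs : (⋂ i, X (e i) ⁻¹' (s i)) = ⋂ j, X j ⁻¹' (r j) := by
      ext ω
      simp only [Set.mem_iInter, Set.mem_preimage, hr]
      constructor
      · intro h j i hij
        exact hij ▸ h i
      · intro h i
        exact h (e i) i rfl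
    have hmeasr : ∀ j, MeasurableSet (r j) :=
      fun j => MeasurableSet.iInter fun i => MeasurableSet.iInter fun _ => hs i
    rw [hrs, hindep.meas_iInter (fun j => ⟨r j, hmeasr j, rfl⟩)]
    have h1 : ∀ i : Fin d, r (e i) = s i := by
      intro i
      apply Set.Subset.antisymm
      · intro y hy
        simp only [hr, Set.mem_iInter] at hy
        exact hy i rfl
      · intro y hy
        simp only [hr, Set.mem_iInter]
        intro i' hi'
        rw [he hi']
        exact hy
    have h2 : ∀ j, j ∉ Set.range e → r j = Set.univ := by
      intro j hj
      apply Set.eq_univ_iff_forall.2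
      intro y
      simp only [hr, Set.mem_iInter]
      intro i h
      exact absurd ⟨i, h⟩ hj
    have h3 : ∏ j : Fin n, μ (X j ⁻¹' r j)
        = ∏ j ∈ Finset.image e Finset.univ, μ (X j ⁻¹' r j) := by
      symm
      apply Finset.prod_subset (Finset.subset_univ _)
      intro j _ hj
      have : j ∉ Set.range e := by
        intro ⟨i, hi⟩
        exact hj (Finset.mem_image.2 ⟨i, Finset.mem_univ _, hi⟩)
      rw [h2 j this]
      simp
    rw [h3, Finset.prod_image (fun i _ i' _ h => he h)]
    refine Finset.prod_congr rfl fun i _ => ?_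
    rw [h1 i, Measure.map_apply (hXmeas _) (hs i)]
  have key : Measure.map (fun ω (i : Fin d) => X (e i) ω) μ
      = Measure.map (fun ω (i : Fin d) => X (Fin.castLE hdn i) ω) μ := by
    rw [hmap e he, hmap _ (Fin.castLE_injective hdn)]
    congr 1
    funext i
    exact (hid (e i) (Fin.castLE hdn i)).map_eq
  have hint1 : ∫ ω, ψ (fun i => X (e i) ω) ∂μ
      = ∫ v, ψ v ∂(Measure.map (fun ω (i : Fin d) => X (e i) ω) μ) := by
    rw [integral_map (measurable_pi_lambda _ fun i => hXmeas _).aemeasurable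
      hψmeas.aestronglyMeasurable]
  have hint2 : ∫ v, ψ v ∂(Measure.map (fun ω (i : Fin d) => X (Fin.castLE hdn i) ω) μ)
      = ∫ ω, ψ (fun i => X (Fin.castLE hdn i) ω) ∂μ := by
    rw [integral_map (measurable_pi_lambda _ fun i => hXmeas _).aemeasurable
      hψmeas.aestronglyMeasurable]
  rw [hint1, key, hint2, hmean]


end UstatAux
namespace UstatAux

set_option maxHeartbeats 1600000 in
lemma ustat_upper
    {Ω : Type*} [MeasurableSpace Ω] (μ : Measure Ω) [IsProbabilityMeasure μ]
    (n d : ℕ) (hd : 0 < d) (hdn : d ≤ n)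
    (X : Fin n → Ω → ℝ) (hXmeas : ∀ i, Measurable (X i))
    (hindep : iIndepFun X μ)
    (hid : ∀ i j, IdentDistrib (X i) (X j) μ μ)
    (ψ : (Fin d → ℝ) → ℝ) (hψmeas : Measurable ψ)
    (hsym : ∀ (σ : Equiv.Perm (Fin d)) (x : Fin d → ℝ), ψ (x ∘ σ) = ψ x)
    (b : ℝ) (hbpos : 0 < b) (hb : ∀ x, |ψ x| ≤ b)
    (hmean : ∫ ω, ψ (fun i => X (Fin.castLE hdn i) ω) ∂μ = 0)
    (W : Ω → ℝ)
    (hW : ∀ ω, W ω = Real.sqrt n * ((n.choose d : ℝ))⁻¹ *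
      ∑ f ∈ Finset.univ.filter (fun f : Fin d → Fin n => ∀ i j : Fin d, i < j → f i < f j),
        ψ (fun i => X (f i) ω))
    (t : ℝ) (ht : 0 < t) :
    μ {ω | t ≤ W ω} ≤ ENNReal.ofReal (Real.exp (-(t ^ 2 *
            Real.sqrt ((Nat.factorial d : ℝ) ^ 2 * 3 ^ (d - 1) /
              ((d : ℝ) * (d + 1) * (2 * d + 1)) ^ (d - 1)) /
            (8 * b ^ 2 * ((d : ℝ) * (d + 1) * (2 * d + 1) / 6))))) := by
  classical
  have hn : 0 < n := lt_of_lt_of_le hd hdn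
  set m : ℕ := n / d with hm
  have hm1 : 1 ≤ m := (Nat.one_le_div_iff hd).2 hdn
  have hmd : m * d ≤ n := Nat.div_mul_le_self n d
  have hn2m : n ≤ 2 * (m * d) := by
    have h2 : n % d < d := Nat.mod_lt n hd
    have h3 : d * m + n % d = n := by rw [hm]; exact Nat.div_add_mod n d
    have h4 : d * 1 ≤ d * m := Nat.mul_le_mul_left d hm1
    have h5 : d * m = m * d := mul_comm d m
    linarith
  set idx : ℕ → Fin n := fun a => ⟨a % n, Nat.mod_lt a hn⟩ with hidx
  have hblt : ∀ k : ℕ, k < m → ∀ i : Fin d, k * d + (i : ℕ) < n := by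
    intro k hk i
    have h1 : k * d + (i:ℕ) < k * d + d := by
      have := i.isLt; omega
    have h2 : k * d + d = (k+1) * d := by ring
    have h3 : (k+1) * d ≤ m * d := Nat.mul_le_mul_right d (Nat.succ_le_of_lt hk)
    linarith
  have hival : ∀ k : ℕ, k < m → ∀ i : Fin d, ((idx (k * d + i) : Fin n) : ℕ) = k * d + i := by
    intro k hk i
    simp only [hidx]
    exact Nat.mod_eq_of_lt (hblt k hk i)
  have hβinj : ∀ k : ℕ, k < m → Function.Injective (fun i : Fin d => idx (k * d + i)) := by
    intro k hk a a' h
    have h1 : ((idx (k*d + (a:ℕ)) : Fin n) : ℕ) = ((idx (k*d + (a':ℕ)) : Fin n) : ℕ) :=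
      congrArg Fin.val h
    rw [hival k hk a, hival k hk a'] at h1
    exact Fin.ext (by omega)
  set Z : Equiv.Perm (Fin n) → ℕ → Ω → ℝ :=
    fun σ k ω => ψ (fun i => X (σ (idx (k * d + i))) ω) with hZdef
  have hZmeas : ∀ σ k, Measurable (Z σ k) :=
    fun σ k => hψmeas.comp (measurable_pi_lambda _ fun i => hXmeas _)
  have hZbdd : ∀ σ k ω, |Z σ k ω| ≤ b := fun σ k ω => hb _
  have hσβinj : ∀ (σ : Equiv.Perm (Fin n)) (k : ℕ), k < m →
      Function.Injective (fun i : Fin d => σ (idx (k * d + i))) :=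
    fun σ k hk a a' h => hβinj k hk (σ.injective h)
  have hZmean : ∀ σ k, k < m → ∫ ω, Z σ k ω ∂μ = 0 :=
    fun σ k hk => comp_mean_zero μ hdn X hXmeas hindep hid ψ hψmeas hmean (hσβinj σ k hk)
  -- mgf bound for block sums, by induction
  have hmgfT : ∀ (u : ℝ) (σ : Equiv.Perm (Fin n)) (j : ℕ), j ≤ m →
      ∫ ω, Real.exp (u * ∑ k ∈ Finset.range j, Z σ k ω) ∂μ
        ≤ Real.exp ((j : ℝ) * (u ^ 2 * b ^ 2 / 2)) := by
    intro u σ j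
    induction j with
    | zero => intro _; simp
    | succ j ih =>
      intro hj
      have hjm : j < m := hj
      have hj' : j ≤ m := Nat.le_of_lt hjm
      set S : Finset (Fin n) := (Finset.range (j * d)).image (fun a => σ (idx a)) with hS
      set T : Finset (Fin n) :=
        (Finset.Ico (j * d) (j * d + d)).image (fun a => σ (idx a)) with hTs
      have hjd : j * d + d ≤ n := by
        have h1 : (j+1) * d ≤ m * d := Nat.mul_le_mul_right d hj
        have h2 : (j+1) * d = j * d + d := by ring
        linarith
      have hdisj : Disjoint S T := by
        rw [Finset.disjoint_left]
        intro p hp hp'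
        obtain ⟨a, ha, hpa⟩ := Finset.mem_image.1 hp
        obtain ⟨a', ha', hpa'⟩ := Finset.mem_image.1 hp'
        rw [← hpa'] at hpa
        have h1 := σ.injective hpa
        have h2 : a % n = a' % n := congrArg Fin.val h1
        rw [Finset.mem_range] at ha
        rw [Finset.mem_Ico] at ha'
        have hjdn : j * d ≤ n := by omega
        rw [Nat.mod_eq_of_lt (by omega : a < n), Nat.mod_eq_of_lt (by omega : a' < n)] at h2
        omega
      have hmemS : ∀ (k : {x // x ∈ Finset.range j}) (i : Fin d),
          σ (idx ((k : ℕ) * d + (i:ℕ))) ∈ S := by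
        intro k i
        refine Finset.mem_image.2 ⟨(k:ℕ) * d + (i:ℕ), Finset.mem_range.2 ?_, rfl⟩
        have hkj : (k:ℕ) < j := Finset.mem_range.1 k.2
        have heq : ((k:ℕ)+1) * d = (k:ℕ) * d + d := by ring
        have h1 : (k:ℕ) * d + (i:ℕ) < ((k:ℕ) + 1) * d := by
          rw [heq]; exact Nat.add_lt_add_left i.isLt _
        have h2 : ((k:ℕ)+1) * d ≤ j * d := Nat.mul_le_mul_right d (Nat.succ_le_of_lt hkj)
        linarith
      have hmemT : ∀ (i : Fin d), σ (idx (j * d + (i:ℕ))) ∈ T := by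
        intro i
        refine Finset.mem_image.2 ⟨j * d + (i:ℕ), Finset.mem_Ico.2
          ⟨Nat.le_add_right _ _, by have := i.isLt; omega⟩, rfl⟩
      set φ₁ : ((p : {x // x ∈ S}) → ℝ) → ℝ :=
        fun v => ∑ k ∈ (Finset.range j).attach,
          ψ (fun i => v ⟨σ (idx ((k:ℕ) * d + (i:ℕ))), hmemS k i⟩) with hφ₁
      set φ₂ : ((p : {x // x ∈ T}) → ℝ) → ℝ :=
        fun v => ψ (fun i => v ⟨σ (idx (j * d + (i:ℕ))), hmemT i⟩) with hφ₂
      have hφ₁m : Measurable φ₁ :=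
        Finset.measurable_sum _ fun k _ =>
          hψmeas.comp (measurable_pi_lambda _ fun i => measurable_pi_apply _)
      have hφ₂m : Measurable φ₂ :=
        hψmeas.comp (measurable_pi_lambda _ fun i => measurable_pi_apply _)
      have hAB : IndepFun (fun ω => ∑ k ∈ Finset.range j, Z σ k ω) (Z σ j) μ := by
        have h := (hindep.indepFun_finset S T hdisj hXmeas).comp hφ₁m hφ₂m
        have e1 : (φ₁ ∘ fun ω (p : {x // x ∈ S}) => X (p : Fin n) ω)
            = fun ω => ∑ k ∈ Finset.range j, Z σ k ω := by
          funext ω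
          exact Finset.sum_attach (Finset.range j)
            (fun k => ψ (fun i => X (σ (idx (k * d + (i:ℕ)))) ω))
        have e2 : (φ₂ ∘ fun ω (p : {x // x ∈ T}) => X (p : Fin n) ω) = Z σ j := rfl
        rwa [e1, e2] at h
      have hsplit : ∀ ω, Real.exp (u * ∑ k ∈ Finset.range (j+1), Z σ k ω)
          = Real.exp (u * ∑ k ∈ Finset.range j, Z σ k ω) * Real.exp (u * Z σ j ω) := by
        intro ω
        rw [Finset.sum_range_succ, mul_add, Real.exp_add]
      have hmeasA : Measurable (fun ω => Real.exp (u * ∑ k ∈ Finset.range j, Z σ k ω)) :=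
        (((Finset.measurable_sum _ (fun k _ => hZmeas σ k)).const_mul u)).exp
      have hmeasB : Measurable (fun ω => Real.exp (u * Z σ j ω)) :=
        ((hZmeas σ j).const_mul u).exp
      calc ∫ ω, Real.exp (u * ∑ k ∈ Finset.range (j+1), Z σ k ω) ∂μ
          = ∫ ω, Real.exp (u * ∑ k ∈ Finset.range j, Z σ k ω)
              * Real.exp (u * Z σ j ω) ∂μ :=
            integral_congr_ae (Filter.Eventually.of_forall hsplit)
        _ = (∫ ω, Real.exp (u * ∑ k ∈ Finset.range j, Z σ k ω) ∂μ)
              * ∫ ω, Real.exp (u * Z σ j ω) ∂μ := by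
            have hexp : IndepFun (fun ω => Real.exp (u * ∑ k ∈ Finset.range j, Z σ k ω))
                (fun ω => Real.exp (u * Z σ j ω)) μ :=
              hAB.comp (Real.measurable_exp.comp (measurable_id.const_mul u))
                (Real.measurable_exp.comp (measurable_id.const_mul u))
            exact hexp.integral_fun_mul_eq_mul_integral hmeasA.aestronglyMeasurable hmeasB.aestronglyMeasurable
        _ ≤ Real.exp ((j:ℝ) * (u^2*b^2/2)) * Real.exp (u^2*b^2/2) :=
            mul_le_mul (ih hj')
              (hoeffding_mgf (hZmeas σ j) hbpos (fun ω => hZbdd σ j ω) (hZmean σ j hjm) u)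
              (integral_nonneg fun ω => (Real.exp_pos _).le) (Real.exp_nonneg _)
        _ = Real.exp (((j+1 : ℕ):ℝ) * (u^2*b^2/2)) := by
            rw [← Real.exp_add]; congr 1; push_cast; ring
  -- notation for the main objects
  set Incs : Finset (Fin d → Fin n) :=
    Finset.univ.filter (fun f : Fin d → Fin n => ∀ i j : Fin d, i < j → f i < f j) with hIncs
  set Tb : Equiv.Perm (Fin n) → Ω → ℝ := fun σ ω => ∑ k ∈ Finset.range m, Z σ k ω with hTbdef
  have hTmeas : ∀ σ, Measurable (Tb σ) := fun σ => Finset.measurable_sum _ fun k _ => hZmeas σ k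
  have hTbdd : ∀ σ ω, |Tb σ ω| ≤ (m : ℝ) * b := by
    intro σ ω
    calc |Tb σ ω| ≤ ∑ k ∈ Finset.range m, |Z σ k ω| := Finset.abs_sum_le_sum_abs _ _
      _ ≤ ∑ _k ∈ Finset.range m, b := Finset.sum_le_sum fun k _ => hZbdd σ k ω
      _ = m * b := by rw [Finset.sum_const, Finset.card_range, nsmul_eq_mul]
  set SI : Ω → ℝ := fun ω => ∑ f ∈ Incs, ψ (fun i => X (f i) ω) with hSIdef
  have hsum_perm : ∀ ω, ∑ σ : Equiv.Perm (Fin n), Tb σ ω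
      = (m * ((n - d).factorial * d.factorial) : ℕ) • SI ω := by
    intro ω
    calc ∑ σ : Equiv.Perm (Fin n), Tb σ ω
        = ∑ k ∈ Finset.range m, ∑ σ : Equiv.Perm (Fin n), Z σ k ω := Finset.sum_comm
      _ = ∑ _k ∈ Finset.range m, ((n - d).factorial * d.factorial) • SI ω := by
          refine Finset.sum_congr rfl fun k hk => ?_
          have hk' := Finset.mem_range.1 hk
          have h1 : ∑ σ : Equiv.Perm (Fin n), Z σ k ω
              = (n - d).factorial • ∑ g ∈ Finset.univ.filter
                  (fun g : Fin d → Fin n => Function.Injective g),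
                  ψ (fun i => X (g i) ω) :=
            perm_sum_eq (hβinj k hk') (fun g => ψ (fun i => X (g i) ω))
          rw [h1, inj_sum_eq (fun p => X p ω) ψ hsym, smul_smul, ← hIncs]
      _ = (m * ((n - d).factorial * d.factorial) : ℕ) • SI ω := by
          rw [Finset.sum_const, Finset.card_range, smul_smul]
  set C : ℝ := (n.choose d : ℝ) with hC
  have hCpos : 0 < C := by rw [hC]; exact_mod_cast Nat.choose_pos hdn
  have hfacpos : (0:ℝ) < (n.factorial : ℝ) := by exact_mod_cast Nat.factorial_pos n
  have hCfact : C * ((d.factorial : ℝ) * ((n-d).factorial : ℝ)) = (n.factorial : ℝ) := by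
    rw [hC]
    have h := Nat.choose_mul_factorial_mul_factorial hdn
    have h2 : n.choose d * (d.factorial * (n-d).factorial) = n.factorial := by
      rw [← h]; ring
    exact_mod_cast congrArg (Nat.cast : ℕ → ℝ) h2
  have hmpos : (0:ℝ) < (m:ℝ) := by exact_mod_cast hm1
  have hnpos : (0:ℝ) < (n:ℝ) := by exact_mod_cast hn
  set s : ℝ := t * m / (n * b^2) with hs
  have hspos : 0 < s := by rw [hs]; positivity
  set u : ℝ := s * Real.sqrt n / m with hu
  have hWeq : W = fun ω => Real.sqrt n * C⁻¹ * SI ω := funext hW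
  have hWmeas : Measurable W := by
    rw [hWeq, hSIdef, hIncs]
    exact (Finset.measurable_sum _ fun f _ =>
      hψmeas.comp (measurable_pi_lambda _ fun i => hXmeas _)).const_mul _
  have hSIbdd : ∀ ω, |SI ω| ≤ (Incs.card : ℝ) * b := by
    intro ω
    calc |SI ω| ≤ ∑ f ∈ Incs, |ψ (fun i => X (f i) ω)| := Finset.abs_sum_le_sum_abs _ _
      _ ≤ ∑ _f ∈ Incs, b := Finset.sum_le_sum fun f _ => hb _
      _ = (Incs.card : ℝ) * b := by rw [Finset.sum_const, nsmul_eq_mul]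
  have hWbdd : ∀ ω, |W ω| ≤ Real.sqrt n * C⁻¹ * ((Incs.card : ℝ) * b) := by
    intro ω
    rw [hW ω, abs_mul, abs_of_nonneg (show (0:ℝ) ≤ Real.sqrt n * C⁻¹ by positivity)]
    exact mul_le_mul_of_nonneg_left (hSIbdd ω) (by positivity)
  -- Jensen step
  have hwsum : ∑ _σ : Equiv.Perm (Fin n), (1 / (n.factorial : ℝ)) = 1 := by
    rw [Finset.sum_const, Finset.card_univ, Fintype.card_perm, Fintype.card_fin, nsmul_eq_mul]
    field_simp
  have hfne : (n.factorial:ℝ) ≠ 0 := ne_of_gt hfacpos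
  have hmne : (m:ℝ) ≠ 0 := ne_of_gt hmpos
  have hCne : C ≠ 0 := ne_of_gt hCpos
  have hbne : b ≠ 0 := ne_of_gt hbpos
  have hnne : (n:ℝ) ≠ 0 := ne_of_gt hnpos
  have hcoeff : (1/(n.factorial:ℝ)) * (u * ((m * ((n-d).factorial * d.factorial) : ℕ) : ℝ))
      = s * Real.sqrt n * C⁻¹ := by
    rw [hu]
    push_cast
    field_simp
    first
    | linear_combination (s * Real.sqrt n * (m:ℝ)) * hCfact
    | linear_combination (s * Real.sqrt n) * hCfact
    | linear_combination (- (s * Real.sqrt n * (m:ℝ))) * hCfact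
    | linear_combination (- (s * Real.sqrt n)) * hCfact
    | linear_combination hCfact
    | ring
  have hWrep : ∀ ω, s * W ω
      = ∑ σ : Equiv.Perm (Fin n), (1 / (n.factorial : ℝ)) • (u * Tb σ ω) := by
    intro ω
    have h2 : ∑ σ : Equiv.Perm (Fin n), (1 / (n.factorial:ℝ)) • (u * Tb σ ω)
        = (1 / (n.factorial:ℝ)) * (u * ∑ σ : Equiv.Perm (Fin n), Tb σ ω) := by
      simp only [smul_eq_mul]
      rw [← Finset.mul_sum, ← Finset.mul_sum]
    rw [h2, hsum_perm ω, nsmul_eq_mul, hW ω]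
    have h3 : (1/(n.factorial:ℝ)) * (u * (((m * ((n-d).factorial * d.factorial) : ℕ) : ℝ) * SI ω))
        = ((1/(n.factorial:ℝ)) * (u * ((m * ((n-d).factorial * d.factorial) : ℕ) : ℝ))) * SI ω := by
      ring
    rw [h3, hcoeff]
    ring
  have hJen : ∀ ω, Real.exp (s * W ω)
      ≤ ∑ σ : Equiv.Perm (Fin n), (1 / (n.factorial : ℝ)) * Real.exp (u * Tb σ ω) := by
    intro ω
    rw [hWrep ω]
    have h := convexOn_exp.map_sum_le (t := Finset.univ)
      (w := fun _ : Equiv.Perm (Fin n) => 1 / (n.factorial : ℝ))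
      (p := fun σ => u * Tb σ ω)
      (fun _ _ => by positivity) hwsum (fun _ _ => Set.mem_univ _)
    simpa [smul_eq_mul] using h
  -- integrate
  have hintW : Integrable (fun ω => Real.exp (s * W ω)) μ :=
    integrable_exp_bdd hWmeas hWbdd s
  have hintT : ∀ σ, Integrable (fun ω => Real.exp (u * Tb σ ω)) μ :=
    fun σ => integrable_exp_bdd (hTmeas σ) (hTbdd σ) u
  have hmgfW : ∫ ω, Real.exp (s * W ω) ∂μ ≤ Real.exp ((m:ℝ) * (u^2 * b^2 / 2)) := by
    calc ∫ ω, Real.exp (s * W ω) ∂μ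
        ≤ ∫ ω, ∑ σ : Equiv.Perm (Fin n), (1 / (n.factorial : ℝ)) * Real.exp (u * Tb σ ω) ∂μ :=
          integral_mono hintW (integrable_finset_sum _ fun σ _ => (hintT σ).const_mul _) hJen
      _ = ∑ σ : Equiv.Perm (Fin n), (1 / (n.factorial : ℝ)) * ∫ ω, Real.exp (u * Tb σ ω) ∂μ := by
          rw [integral_finset_sum _ fun σ _ => (hintT σ).const_mul _]
          exact Finset.sum_congr rfl fun σ _ => integral_const_mul _ _
      _ ≤ ∑ _σ : Equiv.Perm (Fin n), (1 / (n.factorial : ℝ))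
            * Real.exp ((m:ℝ) * (u^2 * b^2 / 2)) :=
          Finset.sum_le_sum fun σ _ => mul_le_mul_of_nonneg_left (hmgfT u σ m le_rfl)
            (by positivity)
      _ = Real.exp ((m:ℝ) * (u^2 * b^2 / 2)) := by
          rw [← Finset.sum_mul, hwsum, one_mul]
  -- Chernoff
  have hcher := measure_ge_le_exp_mul_mgf (X := W) (μ := μ) (t := s) t hspos.le hintW
  have hmgf_eq : mgf W μ s = ∫ ω, Real.exp (s * W ω) ∂μ := rfl
  rw [hmgf_eq] at hcher
  -- final numeric bound
  have harith : Real.exp (-s * t) * Real.exp ((m:ℝ) * (u^2 * b^2 / 2))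
      ≤ Real.exp (-(t ^ 2 *
            Real.sqrt ((Nat.factorial d : ℝ) ^ 2 * 3 ^ (d - 1) /
              ((d : ℝ) * (d + 1) * (2 * d + 1)) ^ (d - 1)) /
            (8 * b ^ 2 * ((d : ℝ) * (d + 1) * (2 * d + 1) / 6)))) := by
    rw [← Real.exp_add]
    apply Real.exp_le_exp.2
    have hu2 : u^2 = s^2 * n / m^2 := by
      rw [hu, div_pow, mul_pow, Real.sq_sqrt (by positivity : (0:ℝ) ≤ (n:ℝ))]
    have hexp_eq : -s * t + (m:ℝ) * (u^2 * b^2 / 2) = -(t^2 * (m:ℝ) / (2 * n * b^2)) := by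
      rw [hu2, hs]
      field_simp
      ring
    rw [hexp_eq, neg_le_neg_iff]
    have hκle := sqrt_kappa_le hd
    have hd1 : (1:ℝ) ≤ (d:ℝ) := by exact_mod_cast hd
    have hdpos : (0:ℝ) < (d:ℝ) := by linarith
    have hγpos : (0:ℝ) < (d : ℝ) * ((d:ℝ) + 1) * (2 * (d:ℝ) + 1) / 6 := by
      have : (0:ℝ) < (d : ℝ) * ((d:ℝ) + 1) * (2 * (d:ℝ) + 1) :=
        mul_pos (mul_pos hdpos (by linarith)) (by linarith)
      linarith
    calc t ^ 2 * Real.sqrt ((Nat.factorial d : ℝ) ^ 2 * 3 ^ (d - 1) /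
              ((d : ℝ) * (d + 1) * (2 * d + 1)) ^ (d - 1)) /
            (8 * b ^ 2 * ((d : ℝ) * (d + 1) * (2 * d + 1) / 6))
        ≤ t ^ 2 * (2 * ((d : ℝ) * (d + 1) * (2 * d + 1) / 6) / d) /
            (8 * b ^ 2 * ((d : ℝ) * (d + 1) * (2 * d + 1) / 6)) := by
          gcongr
      _ = t ^ 2 / (4 * d * b^2) := by
          rw [div_eq_div_iff (by positivity) (by positivity)]
          field_simp
          ring
      _ ≤ t^2 * (m:ℝ) / (2 * n * b^2) := by
          rw [div_le_div_iff₀ (by positivity) (by positivity)]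
          have hcast : (n:ℝ) ≤ 2 * ((m:ℝ) * (d:ℝ)) := by exact_mod_cast hn2m
          have h6 : (0:ℝ) ≤ t^2 * b^2 := by positivity
          nlinarith [mul_le_mul_of_nonneg_left hcast h6]
  -- conclude
  calc μ {ω | t ≤ W ω} = ENNReal.ofReal ((μ {ω | t ≤ W ω}).toReal) :=
        (ENNReal.ofReal_toReal (measure_ne_top _ _)).symm
    _ ≤ ENNReal.ofReal (Real.exp (-(t ^ 2 *
            Real.sqrt ((Nat.factorial d : ℝ) ^ 2 * 3 ^ (d - 1) /
              ((d : ℝ) * (d + 1) * (2 * d + 1)) ^ (d - 1)) /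
            (8 * b ^ 2 * ((d : ℝ) * (d + 1) * (2 * d + 1) / 6))))) := by
        apply ENNReal.ofReal_le_ofReal
        calc (μ {ω | t ≤ W ω}).toReal ≤ Real.exp (-s * t) * ∫ ω, Real.exp (s * W ω) ∂μ := hcher
          _ ≤ Real.exp (-s * t) * Real.exp ((m:ℝ) * (u^2 * b^2 / 2)) :=
              mul_le_mul_of_nonneg_left hmgfW (Real.exp_nonneg _)
          _ ≤ _ := harith

end UstatAux

/-- Concentration of measure for complete nondegenerate U-statistics:
if `ψ` is a symmetric bounded kernel with zero mean on i.i.d. data, then the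
standardized U-statistic `W_d = √n (n choose d)⁻¹ Σ_{j₁<⋯<j_d} ψ(X_{j₁},…,X_{j_d})`
has sub-Gaussian tails with explicit constants `γ_d² = d(d+1)(2d+1)/6` and
`κ_d = (d!)² 3^{d-1}/(d(d+1)(2d+1))^{d-1}`. -/
theorem ustat_concentration
    {Ω : Type*} [MeasurableSpace Ω] (μ : Measure Ω) [IsProbabilityMeasure μ]
    (n d : ℕ) (hd : 0 < d) (hdn : d ≤ n)
    (X : Fin n → Ω → ℝ) (hXmeas : ∀ i, Measurable (X i))
    (hindep : iIndepFun X μ)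
    (hid : ∀ i j, IdentDistrib (X i) (X j) μ μ)
    (ψ : (Fin d → ℝ) → ℝ) (hψmeas : Measurable ψ)
    (hsym : ∀ (σ : Equiv.Perm (Fin d)) (x : Fin d → ℝ), ψ (x ∘ σ) = ψ x)
    (b : ℝ) (hb : ∀ x, |ψ x| ≤ b)
    (hmean : ∫ ω, ψ (fun i => X (Fin.castLE hdn i) ω) ∂μ = 0)
    (hnondeg : μ {ω | (μ[fun ω' => ψ (fun i => X (Fin.castLE hdn i) ω') |
        MeasurableSpace.comap (X (Fin.castLE hdn ⟨0, hd⟩)) inferInstance]) ω = 0} < 1)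
    (W : Ω → ℝ)
    (hW : ∀ ω, W ω = Real.sqrt n * ((n.choose d : ℝ))⁻¹ *
      ∑ f ∈ Finset.univ.filter (fun f : Fin d → Fin n => ∀ i j : Fin d, i < j → f i < f j),
        ψ (fun i => X (f i) ω))
    (t : ℝ) (ht : 0 < t) :
    μ {ω | t ≤ W ω}
        ≤ ENNReal.ofReal (Real.exp (-(t ^ 2 *
            Real.sqrt ((Nat.factorial d : ℝ) ^ 2 * 3 ^ (d - 1) /
              ((d : ℝ) * (d + 1) * (2 * d + 1)) ^ (d - 1)) /
            (8 * b ^ 2 * ((d : ℝ) * (d + 1) * (2 * d + 1) / 6))))) ∧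
      μ {ω | W ω ≤ -t}
        ≤ ENNReal.ofReal (Real.exp (-(t ^ 2 *
            Real.sqrt ((Nat.factorial d : ℝ) ^ 2 * 3 ^ (d - 1) /
              ((d : ℝ) * (d + 1) * (2 * d + 1)) ^ (d - 1)) /
            (8 * b ^ 2 * ((d : ℝ) * (d + 1) * (2 * d + 1) / 6))))) := by
  have hb0 : 0 ≤ b := (abs_nonneg _).trans (hb 0)
  rcases eq_or_lt_of_le hb0 with hb0' | hbpos
  · -- degenerate case b = 0 : the bound is trivially 1
    have hz : 8 * b ^ 2 * ((d : ℝ) * (d + 1) * (2 * d + 1) / 6) = 0 := by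
      rw [← hb0']
      ring
    rw [hz]
    simp only [div_zero, neg_zero, Real.exp_zero, ENNReal.ofReal_one]
    exact ⟨prob_le_one, prob_le_one⟩
  · constructor
    · exact UstatAux.ustat_upper μ n d hd hdn X hXmeas hindep hid ψ hψmeas hsym b hbpos hb
        hmean W hW t ht
    · have hset : {ω | W ω ≤ -t} = {ω | t ≤ (fun ω => -W ω) ω} := by
        ext ω
        simp only [Set.mem_setOf_eq]
        constructor <;> intro h <;> linarith
      rw [hset]
      exact UstatAux.ustat_upper μ n d hd hdn X hXmeas hindep hid (fun x => -ψ x) hψmeas.neg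
        (fun σ x => by beta_reduce; rw [hsym σ x]) b hbpos
        (fun x => by rw [abs_neg]; exact hb x)
        (by rw [integral_neg, hmean, neg_zero])
        (fun ω => -W ω)
        (fun ω => by
          simp only [Finset.sum_neg_distrib]
          rw [hW ω]
          ring)
        t ht
end
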